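/- Let N and N' be binary phylogenetic networks and c a pair that is reducible in both N and N'. If N'c is a subnetwork of Nc, then N' is a subnetwork of N. -/

import Mathlib

open scoped Classical

/-- A (representation of a) rooted phylogenetic network: vertices are natural
numbers, `E` is the edge set, `root` the root, `taxa` the set of taxa labelling
the leaves via `label`. -/
structure Network (X : Type) where
  V : Finset ℕ
  E : Finset (ℕ × ℕ)
  root : ℕ
  taxa : Finset X
  label : X → ℕ

namespace Network

variable {X : Type}

noncomputable def indeg (N : Network X) (v : ℕ) : ℕ :=
  (N.E.filter (fun e => e.2 = v)).card

noncomputable def outdeg (N : Network X) (v : ℕ) : ℕ :=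
  (N.E.filter (fun e => e.1 = v)).card

noncomputable def parents (N : Network X) (v : ℕ) : Finset ℕ :=
  (N.E.filter (fun e => e.2 = v)).image Prod.fst

noncomputable def children (N : Network X) (v : ℕ) : Finset ℕ :=
  (N.E.filter (fun e => e.1 = v)).image Prod.snd

/-- The parent of a vertex (meaningful when the vertex has a unique parent,
e.g. for leaves). -/
noncomputable def theParent (N : Network X) (v : ℕ) : ℕ :=
  WithTop.untopD 0 (N.parents v).min

def IsLeafNode (N : Network X) (v : ℕ) : Prop := N.indeg v = 1 ∧ N.outdeg v = 0

def IsTreeNode (N : Network X) (v : ℕ) : Prop := N.indeg v = 1 ∧ 2 ≤ N.outdeg v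

def IsRetic (N : Network X) (v : ℕ) : Prop := 2 ≤ N.indeg v ∧ N.outdeg v = 1

/-- Well-formedness: a phylogenetic network has a single outdegree-1, indegree-0
root, leaves bijectively labelled by the taxa, all other nodes tree nodes or
reticulations, and it is acyclic. -/
def IsPhylo (N : Network X) : Prop :=
  N.root ∈ N.V ∧ N.indeg N.root = 0 ∧ N.outdeg N.root = 1 ∧
  (∀ e ∈ N.E, e.1 ∈ N.V ∧ e.2 ∈ N.V) ∧
  Set.InjOn N.label ↑N.taxa ∧
  (∀ x ∈ N.taxa, N.label x ∈ N.V ∧ N.IsLeafNode (N.label x)) ∧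
  (∀ v ∈ N.V, N.IsLeafNode v → ∃ x ∈ N.taxa, N.label x = v) ∧
  (∀ v ∈ N.V, v = N.root ∨ N.IsLeafNode v ∨ N.IsTreeNode v ∨ N.IsRetic v) ∧
  (∀ v : ℕ, ¬ Relation.TransGen (fun a b => (a, b) ∈ N.E) v v)

def SemiBinary (N : Network X) : Prop := ∀ v ∈ N.V, N.IsTreeNode v → N.outdeg v = 2

def IsBinary (N : Network X) : Prop :=
  N.SemiBinary ∧ ∀ v ∈ N.V, N.IsRetic v → N.indeg v = 2

def StackFree (N : Network X) : Prop :=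
  ∀ e ∈ N.E, ¬ (N.IsRetic e.1 ∧ N.IsRetic e.2)

def IsTreeChild (N : Network X) : Prop :=
  N.StackFree ∧
  ∀ v ∈ N.V, N.IsTreeNode v → ∃ c ∈ N.children v, N.IsTreeNode c ∨ N.IsLeafNode c

def IsTree (N : Network X) : Prop := ∀ v ∈ N.V, ¬ N.IsRetic v

/-- Number of reticulation edges minus number of reticulations. -/
noncomputable def reticulationNumber (N : Network X) : ℕ :=
  (N.E.filter (fun e => N.IsRetic e.2)).card - (N.V.filter (fun v => N.IsRetic v)).card

/-- `(x, y)` is a cherry: two distinct leaves sharing a parent. -/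
def IsCherry (N : Network X) (x y : X) : Prop :=
  x ∈ N.taxa ∧ y ∈ N.taxa ∧ x ≠ y ∧
  ∃ p : ℕ, (p, N.label x) ∈ N.E ∧ (p, N.label y) ∈ N.E

/-- `(x, y)` is a reticulated cherry: the parent of `x` is a reticulation, the
parent of `y` a tree node which is also a parent of the parent of `x`. -/
def IsRetCherry (N : Network X) (x y : X) : Prop :=
  x ∈ N.taxa ∧ y ∈ N.taxa ∧ x ≠ y ∧
  ∃ px py : ℕ, (px, N.label x) ∈ N.E ∧ (py, N.label y) ∈ N.E ∧
    N.IsRetic px ∧ N.IsTreeNode py ∧ (py, px) ∈ N.E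

def ReduciblePair (N : Network X) (x y : X) : Prop :=
  N.IsCherry x y ∨ N.IsRetCherry x y

noncomputable def delVert (N : Network X) (v : ℕ) : Network X :=
  { V := N.V.erase v,
    E := N.E.filter (fun e => e.1 ≠ v ∧ e.2 ≠ v),
    root := N.root, taxa := N.taxa, label := N.label }

noncomputable def delEdge (N : Network X) (e : ℕ × ℕ) : Network X :=
  { N with E := N.E.erase e }

/-- Suppress a degree-2 (indegree-1, outdegree-1) vertex. -/
noncomputable def suppress (N : Network X) (v : ℕ) : Network X :=
  if N.indeg v = 1 ∧ N.outdeg v = 1 then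
    { V := N.V.erase v,
      E := (N.E.filter (fun e => e.1 ≠ v ∧ e.2 ≠ v)) ∪ (N.parents v ×ˢ N.children v),
      root := N.root, taxa := N.taxa, label := N.label }
  else N

/-- Reduce an ordered pair `(x, y)`: in the cherry case delete the leaf `x` and
suppress its parent; in the reticulated-cherry case delete the reticulation edge
between the two parents and suppress the resulting degree-2 vertices; otherwise
do nothing. -/
noncomputable def reducePair (N : Network X) (c : X × X) : Network X :=
  if N.IsCherry c.1 c.2 then
    suppress
      { V := N.V.erase (N.label c.1),
        E := N.E.filter (fun e => e.1 ≠ N.label c.1 ∧ e.2 ≠ N.label c.1),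
        root := N.root, taxa := N.taxa.erase c.1, label := N.label }
      (N.theParent (N.label c.1))
  else if N.IsRetCherry c.1 c.2 then
    (((N.delEdge (N.theParent (N.label c.2), N.theParent (N.label c.1))).suppress
        (N.theParent (N.label c.2))).suppress (N.theParent (N.label c.1)))
  else N

/-- Successive reduction of a network by a sequence of ordered pairs. -/
noncomputable def reduceSeq (N : Network X) (S : List (X × X)) : Network X :=
  S.foldl (fun M c => M.reducePair c) N

/-- A network consisting of a single leaf, its root, and the edge between them. -/
def IsSingleLeaf (N : Network X) : Prop :=
  ∃ x ∈ N.taxa, N.V = {N.root, N.label x} ∧ N.E = {(N.root, N.label x)} ∧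
    N.root ≠ N.label x

/-- `S` reduces `N` to a single-leaf network. -/
def Reduces (S : List (X × X)) (N : Network X) : Prop :=
  (N.reduceSeq S).IsSingleLeaf

/-- A cherry-picking sequence: ordered pairs of distinct taxa such that each
second coordinate reappears later as a first coordinate, or is the second
coordinate of the last pair. -/
def IsCPS (S : List (X × X)) : Prop :=
  (∀ p ∈ S, p.1 ≠ p.2) ∧
  ∀ (i : ℕ) (hi : i < S.length),
    ((S.get ⟨i, hi⟩).2 ∈ (S.drop (i + 1)).map Prod.fst) ∨
    (∃ q, S.getLast? = some q ∧ (S.get ⟨i, hi⟩).2 = q.2)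

/-- A tree-child sequence: a CPS in which a leaf appearing as a first coordinate
never appears later as a second coordinate. -/
def IsTCS (S : List (X × X)) : Prop :=
  IsCPS S ∧
  ∀ (i j : ℕ) (hi : i < S.length) (hj : j < S.length),
    i < j → (S.get ⟨i, hi⟩).1 ≠ (S.get ⟨j, hj⟩).2

def IsPartialCPS (S : List (X × X)) : Prop := ∃ T, IsCPS (S ++ T)

def IsPartialTCS (S : List (X × X)) : Prop := ∃ T, IsTCS (S ++ T)

/-- A minimal CPS for `N`: a CPS reducing `N` in which every pair changes the
network. -/
def IsMinimalCPS (S : List (X × X)) (N : Network X) : Prop :=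
  IsCPS S ∧ Reduces S N ∧
  ∀ i < S.length, N.reduceSeq (S.take (i + 1)) ≠ N.reduceSeq (S.take i)

def IsMinimalTCS (S : List (X × X)) (N : Network X) : Prop :=
  IsTCS S ∧ Reduces S N ∧
  ∀ i < S.length, N.reduceSeq (S.take (i + 1)) ≠ N.reduceSeq (S.take i)

/-- A cherry-picking network: a phylogenetic network reducible by some CPS. -/
def IsCPN (N : Network X) : Prop :=
  N.IsPhylo ∧ ∃ S, IsCPS S ∧ Reduces S N

/-- A directed path in `N`, given as its list of vertices. -/
def IsDipath (N : Network X) (l : List ℕ) : Prop :=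
  l.Chain' (fun a b => (a, b) ∈ N.E)

def pathEdges (l : List ℕ) : List (ℕ × ℕ) := l.zip l.tail

/-- An embedding of `N'` into `N`: an injective node map and a map of edges to
edge-disjoint directed paths, respecting the node map and the leaf labels. -/
def IsEmbedding (N' N : Network X) (f : ℕ → ℕ) (g : ℕ × ℕ → List ℕ) : Prop :=
  (∀ v ∈ N'.V, f v ∈ N.V) ∧
  Set.InjOn f ↑N'.V ∧
  (∀ x ∈ N'.taxa, f (N'.label x) = N.label x) ∧
  (∀ e ∈ N'.E, N.IsDipath (g e) ∧ (g e).head? = some (f e.1) ∧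
    (g e).getLast? = some (f e.2)) ∧
  (∀ e ∈ N'.E, ∀ e' ∈ N'.E, e ≠ e' →
    ∀ p ∈ pathEdges (g e), p ∉ pathEdges (g e'))

/-- `N'` is a subnetwork of `N` if `N'` embeds into `N`. -/
def IsSubnetwork (N' N : Network X) : Prop :=
  ∃ f g, IsEmbedding N' N f g

/-- Contract the edge `(u, v)`, identifying `v` with `u`. -/
noncomputable def contractEdge (N : Network X) (u v : ℕ) : Network X :=
  { V := N.V.erase v,
    E := (N.E.erase (u, v)).image
      (fun e => ((if e.1 = v then u else e.1), (if e.2 = v then u else e.2))),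
    root := if N.root = v then u else N.root,
    taxa := N.taxa,
    label := fun x => if N.label x = v then u else N.label x }

def ContractStep (N M : Network X) : Prop :=
  ∃ u v : ℕ, (u, v) ∈ N.E ∧ M = N.contractEdge u v

/-- `N` is a refinement of `M` if `M` can be obtained from `N` by contracting
some edges. -/
def IsRefinement (N M : Network X) : Prop :=
  Relation.ReflTransGen ContractStep N M

/-- `N` contains `M` if some refinement of `M` is a subnetwork of `N`. -/
def Contains (N M : Network X) : Prop :=
  ∃ M' : Network X, IsRefinement M' M ∧ IsSubnetwork M' N

/-- Isomorphism of labelled networks. -/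
def Isomorphic (N N' : Network X) : Prop :=
  N.taxa = N'.taxa ∧
  ∃ f : ℕ → ℕ, Set.BijOn f ↑N.V ↑N'.V ∧
    (∀ u ∈ N.V, ∀ v ∈ N.V, ((u, v) ∈ N.E ↔ (f u, f v) ∈ N'.E)) ∧
    f N.root = N'.root ∧
    (∀ x ∈ N.taxa, f (N.label x) = N'.label x)

end Network

namespace Network

variable {X : Type}

lemma sink_of_outdeg_zero {N : Network X} {v : ℕ} (h : N.outdeg v = 0) :
    ∀ e ∈ N.E, e.1 ≠ v := by
  intro e he hv
  have h0 : N.E.filter (fun e => e.1 = v) = ∅ := Finset.card_eq_zero.mp h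
  have : e ∈ N.E.filter (fun e => e.1 = v) := Finset.mem_filter.mpr ⟨he, hv⟩
  rw [h0] at this
  exact absurd this (Finset.notMem_empty e)

lemma in_filter_eq {N : Network X} {v p : ℕ} (h1 : N.indeg v = 1) (hp : (p, v) ∈ N.E) :
    ∀ e ∈ N.E, e.2 = v → e = (p, v) := by
  obtain ⟨a, ha⟩ := Finset.card_eq_one.mp h1
  intro e he hv
  have hpa : (p, v) ∈ N.E.filter (fun e => e.2 = v) := Finset.mem_filter.mpr ⟨hp, rfl⟩
  have hea : e ∈ N.E.filter (fun e => e.2 = v) := Finset.mem_filter.mpr ⟨he, hv⟩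
  rw [ha, Finset.mem_singleton] at hpa hea
  rw [hea, hpa]

lemma out_filter_eq {N : Network X} {v q : ℕ} (h1 : N.outdeg v = 1) (hq : (v, q) ∈ N.E) :
    ∀ e ∈ N.E, e.1 = v → e = (v, q) := by
  obtain ⟨a, ha⟩ := Finset.card_eq_one.mp h1
  intro e he hv
  have hpa : (v, q) ∈ N.E.filter (fun e => e.1 = v) := Finset.mem_filter.mpr ⟨hq, rfl⟩
  have hea : e ∈ N.E.filter (fun e => e.1 = v) := Finset.mem_filter.mpr ⟨he, hv⟩
  rw [ha, Finset.mem_singleton] at hpa hea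
  rw [hea, hpa]

lemma exists_in_edge {N : Network X} {v : ℕ} (h1 : N.indeg v = 1) :
    ∃ p, (p, v) ∈ N.E := by
  obtain ⟨a, ha⟩ := Finset.card_eq_one.mp h1
  have : a ∈ N.E.filter (fun e => e.2 = v) := by rw [ha]; exact Finset.mem_singleton_self a
  rw [Finset.mem_filter] at this
  exact ⟨a.1, by rw [show (a.1, v) = a from Prod.ext rfl this.2.symm] ; exact this.1⟩

lemma out_two_eq {N : Network X} {v a b : ℕ} (h : N.outdeg v = 2)
    (ha : (v, a) ∈ N.E) (hb : (v, b) ∈ N.E) (hab : a ≠ b) :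
    ∀ e ∈ N.E, e.1 = v → e = (v, a) ∨ e = (v, b) := by
  obtain ⟨x, y, hxy, hset⟩ := Finset.card_eq_two.mp h
  intro e he hv
  have hma : (v, a) ∈ N.E.filter (fun e => e.1 = v) := Finset.mem_filter.mpr ⟨ha, rfl⟩
  have hmb : (v, b) ∈ N.E.filter (fun e => e.1 = v) := Finset.mem_filter.mpr ⟨hb, rfl⟩
  have hme : e ∈ N.E.filter (fun e => e.1 = v) := Finset.mem_filter.mpr ⟨he, hv⟩
  rw [hset, Finset.mem_insert, Finset.mem_singleton] at hma hmb hme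
  rcases hma with h1 | h1 <;> rcases hmb with h2 | h2 <;> rcases hme with h3 | h3 <;>
    simp_all [Prod.ext_iff]

lemma in_two_other {N : Network X} {v p : ℕ} (h : N.indeg v = 2) (hp : (p, v) ∈ N.E) :
    ∃ z, z ≠ p ∧ (z, v) ∈ N.E ∧ (∀ e ∈ N.E, e.2 = v → e = (p, v) ∨ e = (z, v)) := by
  obtain ⟨x, y, hxy, hset⟩ := Finset.card_eq_two.mp h
  have hxm : x ∈ N.E.filter (fun e => e.2 = v) := by rw [hset]; simp
  have hym : y ∈ N.E.filter (fun e => e.2 = v) := by rw [hset]; simp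
  rw [Finset.mem_filter] at hxm hym
  have hxe : x = (x.1, v) := Prod.ext rfl hxm.2
  have hye : y = (y.1, v) := Prod.ext rfl hym.2
  have hpm : (p, v) ∈ N.E.filter (fun e => e.2 = v) := Finset.mem_filter.mpr ⟨hp, rfl⟩
  rw [hset, Finset.mem_insert, Finset.mem_singleton] at hpm
  have hall : ∀ e ∈ N.E, e.2 = v → e = x ∨ e = y := by
    intro e he hv
    have : e ∈ N.E.filter (fun e => e.2 = v) := Finset.mem_filter.mpr ⟨he, hv⟩
    rw [hset, Finset.mem_insert, Finset.mem_singleton] at this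
    exact this
  rcases hpm with h1 | h1
  · refine ⟨y.1, ?_, by rw [← hye]; exact hym.1, ?_⟩
    · intro hh; apply hxy; rw [← h1, hye, hh]
    · intro e he hv
      rcases hall e he hv with h2 | h2
      · left; rw [h2, ← h1]
      · right; rw [h2, hye]
  · refine ⟨x.1, ?_, by rw [← hxe]; exact hxm.1, ?_⟩
    · intro hh; apply hxy; rw [hxe, hh, h1]
    · intro e he hv
      rcases hall e he hv with h2 | h2
      · right; rw [h2, hxe]
      · left; rw [h2, ← h1]

lemma theParent_eq {N : Network X} {v p : ℕ} (h1 : N.indeg v = 1) (hp : (p, v) ∈ N.E) :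
    N.theParent v = p := by
  have hfin : N.E.filter (fun e => e.2 = v) = {(p, v)} := by
    ext e
    simp only [Finset.mem_filter, Finset.mem_singleton]
    exact ⟨fun ⟨he, h2⟩ => in_filter_eq h1 hp e he h2, fun h => h ▸ ⟨hp, rfl⟩⟩
  have hpar : N.parents v = {p} := by
    rw [parents, hfin]; simp
  rw [theParent, hpar, Finset.min_singleton]
  rfl

lemma suppress_spec {M : Network X} {v a b : ℕ}
    (ha : (a, v) ∈ M.E) (hb : (v, b) ∈ M.E)
    (hin : ∀ e ∈ M.E, e.2 = v → e = (a, v))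
    (hout : ∀ e ∈ M.E, e.1 = v → e = (v, b)) :
    (M.suppress v).V = M.V.erase v ∧
    (∀ e : ℕ × ℕ, e ∈ (M.suppress v).E ↔ (e ∈ M.E ∧ e.1 ≠ v ∧ e.2 ≠ v) ∨ e = (a, b)) ∧
    (M.suppress v).root = M.root ∧ (M.suppress v).taxa = M.taxa ∧
    (M.suppress v).label = M.label := by
  have hfin : M.E.filter (fun e => e.2 = v) = {(a, v)} := by
    ext e
    simp only [Finset.mem_filter, Finset.mem_singleton]
    exact ⟨fun ⟨he, h2⟩ => hin e he h2, fun h => h ▸ ⟨ha, rfl⟩⟩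
  have hfout : M.E.filter (fun e => e.1 = v) = {(v, b)} := by
    ext e
    simp only [Finset.mem_filter, Finset.mem_singleton]
    exact ⟨fun ⟨he, h2⟩ => hout e he h2, fun h => h ▸ ⟨hb, rfl⟩⟩
  have hcond : M.indeg v = 1 ∧ M.outdeg v = 1 := by
    constructor
    · rw [indeg, hfin]; simp
    · rw [outdeg, hfout]; simp
  have hpar : M.parents v = {a} := by rw [parents, hfin]; simp
  have hch : M.children v = {b} := by rw [children, hfout]; simp
  rw [suppress, if_pos hcond]
  refine ⟨rfl, ?_, rfl, rfl, rfl⟩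
  intro e
  simp only [Finset.mem_union, Finset.mem_filter, hpar, hch,
    Finset.singleton_product_singleton, Finset.mem_singleton]

lemma no_self_edge {N : Network X}
    (hac : ∀ v : ℕ, ¬ Relation.TransGen (fun a b => (a, b) ∈ N.E) v v) {v : ℕ} :
    (v, v) ∉ N.E := fun h => hac v (Relation.TransGen.single h)

lemma no_two_cycle {N : Network X}
    (hac : ∀ v : ℕ, ¬ Relation.TransGen (fun a b => (a, b) ∈ N.E) v v) {u v : ℕ}
    (h1 : (u, v) ∈ N.E) (h2 : (v, u) ∈ N.E) : False :=
  hac u (Relation.TransGen.head h1 (Relation.TransGen.single h2))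

lemma dipath_edges_mem {N : Network X} :
    ∀ l : List ℕ, N.IsDipath l → ∀ p ∈ pathEdges l, p ∈ N.E
  | [], _, p, hp => by simp [pathEdges] at hp
  | [_], _, p, hp => by simp [pathEdges] at hp
  | x :: y :: r, h, p, hp => by
      simp only [IsDipath, List.Chain', List.isChain_cons_cons] at h
      have heq : pathEdges (x :: y :: r) = (x, y) :: pathEdges (y :: r) := rfl
      rw [heq, List.mem_cons] at hp
      rcases hp with rfl | hp
      · exact h.1
      · exact dipath_edges_mem (y :: r) h.2 p hp

lemma dipath_transfer {N Nc : Network X}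
    (hmid : ∀ e ∈ Nc.E, (∃ e' ∈ Nc.E, e'.1 = e.2) → e ∈ N.E) :
    ∀ l : List ℕ, Nc.IsDipath l →
      (∀ u v : ℕ, (u, v) ∈ Nc.E → l.getLast? = some v → (u, v) ∈ N.E) →
      N.IsDipath l
  | [], _, _ => by simp [IsDipath, List.Chain']
  | [x], _, _ => by simp [IsDipath, List.Chain']
  | x :: y :: r, h, hl => by
      simp only [IsDipath, List.Chain', List.isChain_cons_cons] at h
      simp only [IsDipath, List.Chain', List.isChain_cons_cons]
      have hlast : (x :: y :: r).getLast? = (y :: r).getLast? := List.getLast?_cons_cons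
      refine ⟨?_, dipath_transfer hmid (y :: r) h.2
        (fun u v huv hv => hl u v huv (by rw [hlast]; exact hv))⟩
      cases r with
      | nil => exact hl x y h.1 (by simp)
      | cons z r' =>
          exact hmid (x, y) h.1 ⟨(y, z), (List.isChain_cons_cons.mp h.2).1, rfl⟩

end Network

namespace Network

variable {X : Type}

lemma surgery {N Nc : Network X} {a w w' : ℕ}
    (hin : ∀ e ∈ Nc.E, e.2 = w → e = (a, w))
    (hsink : ∀ e ∈ Nc.E, e.1 ≠ w)
    (hmid : ∀ e ∈ Nc.E, (∃ e' ∈ Nc.E, e'.1 = e.2) → e ∈ N.E)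
    (haw' : (a, w') ∈ N.E) :
    ∀ l : List ℕ, Nc.IsDipath l → l.getLast? = some w → l.head? ≠ some w →
      N.IsDipath (l.dropLast ++ [w']) ∧ (l.dropLast ++ [w']).head? = l.head? ∧
      (l.dropLast ++ [w']).getLast? = some w' ∧
      (∀ p ∈ pathEdges (l.dropLast ++ [w']), p ∈ pathEdges l ∨ p = (a, w'))
  | [] => by intro _ h _; simp at h
  | [x] => by
      intro _ hlast hhead
      simp only [List.getLast?_singleton, List.head?_cons] at hlast hhead
      exact absurd hlast hhead
  | x :: y :: r => by
      intro hch hlast hhead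
      simp only [IsDipath, List.Chain', List.isChain_cons_cons] at hch
      cases r with
      | nil =>
          have hyw : y = w := by simpa using hlast
          have hxa : x = a := by
            have h2 := hin (x, y) hch.1 (by simp [hyw])
            exact congrArg Prod.fst h2
          refine ⟨?_, rfl, List.getLast?_concat, ?_⟩
          · show N.IsDipath [x, w']
            rw [hxa]; simp [IsDipath, List.Chain', haw']
          · intro p hp
            have hp' : p = (x, w') := by simpa [pathEdges] using hp
            exact Or.inr (by rw [hp', hxa])
      | cons z r' =>
          have hyz : (y, z) ∈ Nc.E := (List.isChain_cons_cons.mp hch.2).1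
          have hyw : y ≠ w := fun h => hsink (y, z) hyz h
          have ih := surgery hin hsink hmid haw' (y :: z :: r') hch.2
            (by rw [← List.getLast?_cons_cons (a := x)]; exact hlast)
            (by simpa using hyw)
          have hxyN : (x, y) ∈ N.E := hmid (x, y) hch.1 ⟨(y, z), hyz, rfl⟩
          have hform : (x :: y :: z :: r').dropLast ++ [w']
              = x :: ((y :: z :: r').dropLast ++ [w']) := rfl
          have hform2 : (y :: z :: r').dropLast ++ [w'] = y :: ((z :: r').dropLast ++ [w']) := rfl
          refine ⟨?_, ?_, ?_, ?_⟩
          · rw [hform]; simp only [IsDipath, List.Chain', List.isChain_cons]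
            constructor
            · intro h hh
              rw [hform2] at hh
              simp only [List.head?_cons, Option.mem_def, Option.some.injEq] at hh
              rw [← hh]; exact hxyN
            · exact ih.1
          · rw [hform]; rfl
          · exact List.getLast?_concat
          · intro p hp
            rw [hform, hform2] at hp
            have hpe : pathEdges (x :: y :: ((z :: r').dropLast ++ [w']))
                = (x, y) :: pathEdges (y :: ((z :: r').dropLast ++ [w'])) := rfl
            rw [hpe, List.mem_cons] at hp
            rcases hp with rfl | hp
            · left
              have heq : pathEdges (x :: y :: z :: r') = (x, y) :: pathEdges (y :: z :: r') := rfl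
              rw [heq]; exact List.mem_cons_self
            · rcases ih.2.2.2 p (by rw [hform2]; exact hp) with h | h
              · left
                have : pathEdges (x :: y :: z :: r') = (x, y) :: pathEdges (y :: z :: r') := rfl
                rw [this]; exact List.mem_cons_of_mem _ h
              · exact Or.inr h

lemma extend_embedding {N' N N'c Nc : Network X} {f F : ℕ → ℕ} {g G : ℕ × ℕ → List ℕ}
    {τ : ℕ × ℕ → Option (ℕ × ℕ)} {ν : ℕ × ℕ → List (ℕ × ℕ)}
    (hemb : IsEmbedding N'c Nc f g)
    (hV : ∀ v ∈ N'.V, F v ∈ N.V)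
    (hinj : Set.InjOn F ↑N'.V)
    (hlab : ∀ x ∈ N'.taxa, F (N'.label x) = N.label x)
    (hpath : ∀ e ∈ N'.E, N.IsDipath (G e) ∧ (G e).head? = some (F e.1) ∧
      (G e).getLast? = some (F e.2))
    (hdecomp : ∀ e ∈ N'.E, ∀ p ∈ pathEdges (G e),
      (∃ a, τ e = some a ∧ a ∈ N'c.E ∧ p ∈ pathEdges (g a)) ∨ p ∈ ν e)
    (hτ : ∀ e ∈ N'.E, ∀ e2 ∈ N'.E, e ≠ e2 → ∀ a, τ e = some a → τ e2 = some a → False)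
    (hν : ∀ e ∈ N'.E, ∀ p ∈ ν e, p ∉ Nc.E)
    (hνd : ∀ e ∈ N'.E, ∀ e2 ∈ N'.E, e ≠ e2 → ∀ p ∈ ν e, p ∉ ν e2) :
    IsSubnetwork N' N := by
  refine ⟨F, G, hV, hinj, hlab, hpath, ?_⟩
  intro e he e2 he2 hne p hp hp2
  have h4 := hemb.2.2.2.1
  have h5 := hemb.2.2.2.2
  rcases hdecomp e he p hp with ⟨a, hta, haE, hpa⟩ | hpv
  · rcases hdecomp e2 he2 p hp2 with ⟨a2, hta2, haE2, hpa2⟩ | hpv2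
    · have hane : a ≠ a2 := fun hh => hτ e he e2 he2 hne a hta (hh ▸ hta2)
      exact h5 a haE a2 haE2 hane p hpa hpa2
    · exact hν e2 he2 p hpv2 (dipath_edges_mem _ (h4 a haE).1 p hpa)
  · rcases hdecomp e2 he2 p hp2 with ⟨a2, hta2, haE2, hpa2⟩ | hpv2
    · exact hν e he p hpv (dipath_edges_mem _ (h4 a2 haE2).1 p hpa2)
    · exact hνd e he e2 he2 hne p hpv hpv2

end Network

namespace Network

variable {X : Type}

structure CherryData (N : Network X) (c : X × X) where
  p : ℕ
  gp : ℕ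
  hx : c.1 ∈ N.taxa
  hy : c.2 ∈ N.taxa
  hccne : c.1 ≠ c.2
  hpx : (p, N.label c.1) ∈ N.E
  hpy : (p, N.label c.2) ∈ N.E
  hgp : (gp, p) ∈ N.E
  hxy : N.label c.1 ≠ N.label c.2
  hplx : p ≠ N.label c.1
  hply : p ≠ N.label c.2
  hgplx : gp ≠ N.label c.1
  hgply : gp ≠ N.label c.2
  hgpp : gp ≠ p
  hsinkx : ∀ e ∈ N.E, e.1 ≠ N.label c.1
  hsinky : ∀ e ∈ N.E, e.1 ≠ N.label c.2
  hinx : ∀ e ∈ N.E, e.2 = N.label c.1 → e = (p, N.label c.1)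
  hiny : ∀ e ∈ N.E, e.2 = N.label c.2 → e = (p, N.label c.2)
  hinp : ∀ e ∈ N.E, e.2 = p → e = (gp, p)
  houtp : ∀ e ∈ N.E, e.1 = p → e = (p, N.label c.1) ∨ e = (p, N.label c.2)
  hpV : p ∈ N.V
  hgpV : gp ∈ N.V
  hlxV : N.label c.1 ∈ N.V
  hlyV : N.label c.2 ∈ N.V
  hV : (N.reducePair c).V = (N.V.erase (N.label c.1)).erase p
  htax : (N.reducePair c).taxa = N.taxa.erase c.1
  hlab : (N.reducePair c).label = N.label
  hE : ∀ e : ℕ × ℕ, e ∈ (N.reducePair c).E ↔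
    (e ∈ N.E ∧ e.1 ≠ N.label c.1 ∧ e.2 ≠ N.label c.1 ∧ e.1 ≠ p ∧ e.2 ≠ p) ∨
      e = (gp, N.label c.2)

lemma CherryData.hmem {N : Network X} {c : X × X} (D : CherryData N c) :
    (D.gp, N.label c.2) ∈ (N.reducePair c).E :=
  (D.hE _).mpr (Or.inr rfl)

lemma CherryData.hnot {N : Network X} {c : X × X} (D : CherryData N c) :
    (D.gp, N.label c.2) ∉ N.E := fun h =>
  D.hgpp (congrArg Prod.fst (D.hiny _ h rfl))

lemma CherryData.hsplit {N : Network X} {c : X × X} (D : CherryData N c) : ∀ e ∈ N.E,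
    e = (D.p, N.label c.1) ∨ e = (D.p, N.label c.2) ∨ e = (D.gp, D.p) ∨
    (e ∈ (N.reducePair c).E ∧ e.1 ≠ N.label c.1 ∧ e.1 ≠ D.p ∧ e.2 ≠ N.label c.1 ∧
      e.2 ≠ D.p ∧ e.2 ≠ N.label c.2) := by
  intro e he
  by_cases h1 : e.1 = D.p
  · rcases D.houtp e he h1 with h | h
    · exact Or.inl h
    · exact Or.inr (Or.inl h)
  by_cases h2 : e.2 = D.p
  · exact Or.inr (Or.inr (Or.inl (D.hinp e he h2)))
  by_cases h3 : e.2 = N.label c.2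
  · exact absurd (congrArg Prod.fst (D.hiny e he h3)) h1
  have h4 : e.2 ≠ N.label c.1 := fun hh => h1 (congrArg Prod.fst (D.hinx e he hh))
  have h5 : e.1 ≠ N.label c.1 := D.hsinkx e he
  exact Or.inr (Or.inr (Or.inr ⟨(D.hE e).mpr (Or.inl ⟨he, h5, h4, h1, h2⟩), h5, h1, h4, h2, h3⟩))

lemma cherry_data_ex {N : Network X} (hN : N.IsPhylo) (hb : N.IsBinary) {c : X × X}
    (h : N.IsCherry c.1 c.2) : Nonempty (CherryData N c) := by
  obtain ⟨hroot, hrin, hrout, hEV, hinjl, hlableaf, hleaflab, hclass, hac⟩ := hN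
  obtain ⟨hx, hy, hccne, p, hpx, hpy⟩ := h
  have hlx := hlableaf c.1 hx
  have hly := hlableaf c.2 hy
  have hxy : N.label c.1 ≠ N.label c.2 := fun hh =>
    hccne (hinjl (Finset.mem_coe.mpr hx) (Finset.mem_coe.mpr hy) hh)
  have hsinkx : ∀ e ∈ N.E, e.1 ≠ N.label c.1 := sink_of_outdeg_zero hlx.2.2
  have hsinky : ∀ e ∈ N.E, e.1 ≠ N.label c.2 := sink_of_outdeg_zero hly.2.2
  have hinx := in_filter_eq hlx.2.1 hpx
  have hiny := in_filter_eq hly.2.1 hpy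
  have hpV : p ∈ N.V := (hEV (p, N.label c.1) hpx).1
  have hplx : p ≠ N.label c.1 := hsinkx _ hpx
  have hply : p ≠ N.label c.2 := hsinky _ hpy
  have hout2 : 2 ≤ N.outdeg p := by
    have hsub : ({(p, N.label c.1), (p, N.label c.2)} : Finset (ℕ × ℕ)) ⊆
        N.E.filter (fun e => e.1 = p) := by
      intro e he
      simp only [Finset.mem_insert, Finset.mem_singleton] at he
      rcases he with rfl | rfl
      · exact Finset.mem_filter.mpr ⟨hpx, rfl⟩
      · exact Finset.mem_filter.mpr ⟨hpy, rfl⟩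
    have hcard : ({(p, N.label c.1), (p, N.label c.2)} : Finset (ℕ × ℕ)).card = 2 := by
      rw [Finset.card_insert_of_notMem (by simp [hxy]), Finset.card_singleton]
    calc 2 = _ := hcard.symm
      _ ≤ _ := Finset.card_le_card hsub
  have htree : N.IsTreeNode p := by
    rcases hclass p hpV with hr | hl | ht | hR
    · rw [hr, hrout] at hout2; exact absurd hout2 (by omega)
    · rw [hl.2] at hout2; exact absurd hout2 (by omega)
    · exact ht
    · rw [hR.2] at hout2; exact absurd hout2 (by omega)
  have hop : N.outdeg p = 2 := hb.1 p hpV htree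
  have hip : N.indeg p = 1 := htree.1
  obtain ⟨gp, hgp⟩ := exists_in_edge hip
  have hinp := in_filter_eq hip hgp
  have houtp := out_two_eq hop hpx hpy hxy
  have hgplx : gp ≠ N.label c.1 := hsinkx _ hgp
  have hgply : gp ≠ N.label c.2 := hsinky _ hgp
  have hgpp : gp ≠ p := fun hh => no_self_edge hac (hh ▸ hgp)
  have hgpV : gp ∈ N.V := (hEV _ hgp).1
  have hch : N.IsCherry c.1 c.2 := ⟨hx, hy, hccne, p, hpx, hpy⟩
  have hpar : N.theParent (N.label c.1) = p := theParent_eq hlx.2.1 hpx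
  set M : Network X := Network.mk (N.V.erase (N.label c.1))
    (N.E.filter (fun e => e.1 ≠ N.label c.1 ∧ e.2 ≠ N.label c.1))
    N.root (N.taxa.erase c.1) N.label with hM
  have hred : N.reducePair c = M.suppress p := by
    rw [hM]
    unfold reducePair
    rw [if_pos hch, hpar]
  have hMgp : (gp, p) ∈ M.E := Finset.mem_filter.mpr ⟨hgp, hgplx, hplx⟩
  have hMpy : (p, N.label c.2) ∈ M.E := Finset.mem_filter.mpr ⟨hpy, hplx, fun hh => hxy hh.symm⟩
  have hMin : ∀ e ∈ M.E, e.2 = p → e = (gp, p) := fun e he h2 =>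
    hinp e (Finset.mem_filter.mp he).1 h2
  have hMout : ∀ e ∈ M.E, e.1 = p → e = (p, N.label c.2) := by
    intro e he h1
    obtain ⟨heE, hcond⟩ := Finset.mem_filter.mp he
    rcases houtp e heE h1 with h | h
    · exact absurd (congrArg Prod.snd h) hcond.2
    · exact h
  obtain ⟨hsV, hsE, hsroot, hstax, hslab⟩ := suppress_spec hMgp hMpy hMin hMout
  refine ⟨⟨p, gp, hx, hy, hccne, hpx, hpy, hgp, hxy, hplx, hply, hgplx, hgply, hgpp,
    hsinkx, hsinky, hinx, hiny, hinp, houtp, hpV, hgpV, hlx.1, hly.1, ?_, ?_, ?_, ?_⟩⟩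
  · rw [hred, hsV]
  · rw [hred, hstax]
  · rw [hred, hslab]
  · intro e
    rw [hred, hsE e]
    have hME : e ∈ M.E ↔ e ∈ N.E ∧ e.1 ≠ N.label c.1 ∧ e.2 ≠ N.label c.1 := by
      rw [hM]; exact Finset.mem_filter
    rw [hME]
    tauto

end Network

namespace Network

variable {X : Type}

structure ReticData (N : Network X) (c : X × X) where
  px : ℕ
  py : ℕ
  z : ℕ
  gpy : ℕ
  hx : c.1 ∈ N.taxa
  hy : c.2 ∈ N.taxa
  hccne : c.1 ≠ c.2
  hpxx : (px, N.label c.1) ∈ N.E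
  hpyy : (py, N.label c.2) ∈ N.E
  hpypx : (py, px) ∈ N.E
  hgpy : (gpy, py) ∈ N.E
  hz : (z, px) ∈ N.E
  hzpy : z ≠ py
  hxy : N.label c.1 ≠ N.label c.2
  hpxlx : px ≠ N.label c.1
  hpxly : px ≠ N.label c.2
  hpylx : py ≠ N.label c.1
  hpyly : py ≠ N.label c.2
  hpxpy : px ≠ py
  hgpylx : gpy ≠ N.label c.1
  hgpyly : gpy ≠ N.label c.2
  hgpypy : gpy ≠ py
  hgpypx : gpy ≠ px
  hzlx : z ≠ N.label c.1
  hzly : z ≠ N.label c.2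
  hzpx : z ≠ px
  hsinkx : ∀ e ∈ N.E, e.1 ≠ N.label c.1
  hsinky : ∀ e ∈ N.E, e.1 ≠ N.label c.2
  hinx : ∀ e ∈ N.E, e.2 = N.label c.1 → e = (px, N.label c.1)
  hiny : ∀ e ∈ N.E, e.2 = N.label c.2 → e = (py, N.label c.2)
  hinpy : ∀ e ∈ N.E, e.2 = py → e = (gpy, py)
  hinpx : ∀ e ∈ N.E, e.2 = px → e = (py, px) ∨ e = (z, px)
  houtpy : ∀ e ∈ N.E, e.1 = py → e = (py, N.label c.2) ∨ e = (py, px)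
  houtpx : ∀ e ∈ N.E, e.1 = px → e = (px, N.label c.1)
  hpxV : px ∈ N.V
  hpyV : py ∈ N.V
  hgpyV : gpy ∈ N.V
  hzV : z ∈ N.V
  hlxV : N.label c.1 ∈ N.V
  hlyV : N.label c.2 ∈ N.V
  hV : (N.reducePair c).V = (N.V.erase py).erase px
  htax : (N.reducePair c).taxa = N.taxa
  hlab : (N.reducePair c).label = N.label
  hE : ∀ e : ℕ × ℕ, e ∈ (N.reducePair c).E ↔
    (e ∈ N.E ∧ e.1 ≠ py ∧ e.2 ≠ py ∧ e.1 ≠ px ∧ e.2 ≠ px) ∨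
      e = (gpy, N.label c.2) ∨ e = (z, N.label c.1)

lemma ReticData.hmemgl {N : Network X} {c : X × X} (D : ReticData N c) :
    (D.gpy, N.label c.2) ∈ (N.reducePair c).E := (D.hE _).mpr (Or.inr (Or.inl rfl))

lemma ReticData.hmemzl {N : Network X} {c : X × X} (D : ReticData N c) :
    (D.z, N.label c.1) ∈ (N.reducePair c).E := (D.hE _).mpr (Or.inr (Or.inr rfl))

lemma ReticData.hnotgl {N : Network X} {c : X × X} (D : ReticData N c) :
    (D.gpy, N.label c.2) ∉ N.E := fun h => D.hgpypy (congrArg Prod.fst (D.hiny _ h rfl))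

lemma ReticData.hnotzl {N : Network X} {c : X × X} (D : ReticData N c) :
    (D.z, N.label c.1) ∉ N.E := fun h => D.hzpx (congrArg Prod.fst (D.hinx _ h rfl))

lemma ReticData.hsplit {N : Network X} {c : X × X} (D : ReticData N c) : ∀ e ∈ N.E,
    e = (D.px, N.label c.1) ∨ e = (D.py, N.label c.2) ∨ e = (D.py, D.px) ∨
    e = (D.gpy, D.py) ∨ e = (D.z, D.px) ∨
    (e ∈ (N.reducePair c).E ∧ e.1 ≠ D.py ∧ e.1 ≠ D.px ∧ e.2 ≠ D.py ∧ e.2 ≠ D.px ∧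
      e.2 ≠ N.label c.1 ∧ e.2 ≠ N.label c.2) := by
  intro e he
  by_cases h1 : e.1 = D.py
  · rcases D.houtpy e he h1 with h | h
    · exact Or.inr (Or.inl h)
    · exact Or.inr (Or.inr (Or.inl h))
  by_cases h2 : e.1 = D.px
  · exact Or.inl (D.houtpx e he h2)
  by_cases h3 : e.2 = D.py
  · exact Or.inr (Or.inr (Or.inr (Or.inl (D.hinpy e he h3))))
  by_cases h4 : e.2 = D.px
  · rcases D.hinpx e he h4 with h | h
    · exact absurd (congrArg Prod.fst h) h1
    · exact Or.inr (Or.inr (Or.inr (Or.inr (Or.inl h))))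
  by_cases h5 : e.2 = N.label c.1
  · exact absurd (congrArg Prod.fst (D.hinx e he h5)) h2
  by_cases h6 : e.2 = N.label c.2
  · exact absurd (congrArg Prod.fst (D.hiny e he h6)) h1
  exact Or.inr (Or.inr (Or.inr (Or.inr (Or.inr
    ⟨(D.hE e).mpr (Or.inl ⟨he, h1, h3, h2, h4⟩), h1, h2, h3, h4, h5, h6⟩))))

lemma retic_data_ex {N : Network X} (hN : N.IsPhylo) (hb : N.IsBinary) {c : X × X}
    (hnc : ¬ N.IsCherry c.1 c.2) (h : N.IsRetCherry c.1 c.2) : Nonempty (ReticData N c) := by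
  obtain ⟨hroot, hrin, hrout, hEV, hinjl, hlableaf, hleaflab, hclass, hac⟩ := hN
  obtain ⟨hx, hy, hccne, px, py, hpxx, hpyy, hretpx, htreepy, hpypx⟩ := h
  have hlx := hlableaf c.1 hx
  have hly := hlableaf c.2 hy
  have hxy : N.label c.1 ≠ N.label c.2 := fun hh =>
    hccne (hinjl (Finset.mem_coe.mpr hx) (Finset.mem_coe.mpr hy) hh)
  have hsinkx : ∀ e ∈ N.E, e.1 ≠ N.label c.1 := sink_of_outdeg_zero hlx.2.2
  have hsinky : ∀ e ∈ N.E, e.1 ≠ N.label c.2 := sink_of_outdeg_zero hly.2.2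
  have hinx := in_filter_eq hlx.2.1 hpxx
  have hiny := in_filter_eq hly.2.1 hpyy
  have hpxV : px ∈ N.V := (hEV _ hpxx).1
  have hpyV : py ∈ N.V := (hEV _ hpyy).1
  have hpxlx : px ≠ N.label c.1 := hsinkx _ hpxx
  have hpxly : px ≠ N.label c.2 := hsinky _ hpxx
  have hpylx : py ≠ N.label c.1 := hsinkx _ hpyy
  have hpyly : py ≠ N.label c.2 := hsinky _ hpyy
  have hpxpy : px ≠ py := by
    intro hh
    have h2 := hpypx
    rw [hh] at h2
    exact no_self_edge hac h2
  have hipx : N.indeg px = 2 := hb.2 px hpxV hretpx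
  have hopx : N.outdeg px = 1 := hretpx.2
  have houtpx := out_filter_eq hopx hpxx
  have hipy : N.indeg py = 1 := htreepy.1
  have hopy : N.outdeg py = 2 := hb.1 py hpyV htreepy
  have hlypx : N.label c.2 ≠ px := fun hh => hpxly hh.symm
  have houtpy := out_two_eq hopy hpyy hpypx hlypx
  obtain ⟨gpy, hgpy⟩ := exists_in_edge hipy
  have hinpy := in_filter_eq hipy hgpy
  obtain ⟨z, hzpy, hz, hinpx⟩ := in_two_other hipx hpypx
  have hgpylx : gpy ≠ N.label c.1 := hsinkx _ hgpy
  have hgpyly : gpy ≠ N.label c.2 := hsinky _ hgpy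
  have hgpypy : gpy ≠ py := fun hh => no_self_edge hac (hh ▸ hgpy)
  have hgpypx : gpy ≠ px := by
    intro hh
    have h2 := hgpy
    rw [hh] at h2
    exact no_two_cycle hac hpypx h2
  have hzlx : z ≠ N.label c.1 := hsinkx _ hz
  have hzly : z ≠ N.label c.2 := hsinky _ hz
  have hzpx : z ≠ px := fun hh => no_self_edge hac (hh ▸ hz)
  have hgpyV : gpy ∈ N.V := (hEV _ hgpy).1
  have hzV : z ∈ N.V := (hEV _ hz).1
  have hret : N.IsRetCherry c.1 c.2 := ⟨hx, hy, hccne, px, py, hpxx, hpyy, hretpx, htreepy, hpypx⟩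
  have hparly : N.theParent (N.label c.2) = py := theParent_eq hly.2.1 hpyy
  have hparlx : N.theParent (N.label c.1) = px := theParent_eq hlx.2.1 hpxx
  set M1 : Network X := N.delEdge (py, px) with hM1
  have hM1E : ∀ e : ℕ × ℕ, e ∈ M1.E ↔ e ≠ (py, px) ∧ e ∈ N.E := fun e => Finset.mem_erase
  have hred : N.reducePair c = (M1.suppress py).suppress px := by
    rw [hM1]
    unfold reducePair
    rw [if_neg hnc, if_pos hret, hparly, hparlx]
  have hMgp : (gpy, py) ∈ M1.E := (hM1E _).mpr
    ⟨fun hh => hgpypy (congrArg Prod.fst hh), hgpy⟩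
  have hMpy : (py, N.label c.2) ∈ M1.E := (hM1E _).mpr
    ⟨fun hh => hlypx (congrArg Prod.snd hh), hpyy⟩
  have hMin : ∀ e ∈ M1.E, e.2 = py → e = (gpy, py) := fun e he h2 =>
    hinpy e ((hM1E e).mp he).2 h2
  have hMout : ∀ e ∈ M1.E, e.1 = py → e = (py, N.label c.2) := by
    intro e he h1
    obtain ⟨hne, heE⟩ := (hM1E e).mp he
    rcases houtpy e heE h1 with h | h
    · exact h
    · exact absurd h hne
  obtain ⟨h1V, h1E, h1root, h1tax, h1lab⟩ := suppress_spec hMgp hMpy hMin hMout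
  set M2 : Network X := M1.suppress py with hM2
  have hM2gp : (z, px) ∈ M2.E := (h1E _).mpr (Or.inl
    ⟨(hM1E _).mpr ⟨fun hh => hzpy (congrArg Prod.fst hh), hz⟩, hzpy, hpxpy⟩)
  have hM2px : (px, N.label c.1) ∈ M2.E := (h1E _).mpr (Or.inl
    ⟨(hM1E _).mpr ⟨fun hh => hpxpy (congrArg Prod.fst hh), hpxx⟩, hpxpy, hpylx.symm⟩)
  have hM2in : ∀ e ∈ M2.E, e.2 = px → e = (z, px) := by
    intro e he h2
    rcases (h1E e).mp he with ⟨heM1, hh1, hh2⟩ | rfl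
    · rcases hinpx e ((hM1E e).mp heM1).2 h2 with h | h
      · exact absurd (congrArg Prod.fst h) hh1
      · exact h
    · exact absurd h2 hlypx
  have hM2out : ∀ e ∈ M2.E, e.1 = px → e = (px, N.label c.1) := by
    intro e he h1
    rcases (h1E e).mp he with ⟨heM1, hh1, hh2⟩ | rfl
    · exact houtpx e ((hM1E e).mp heM1).2 h1
    · exact absurd h1 hgpypx
  obtain ⟨h2V, h2E, h2root, h2tax, h2lab⟩ := suppress_spec hM2gp hM2px hM2in hM2out
  refine ⟨⟨px, py, z, gpy, hx, hy, hccne, hpxx, hpyy, hpypx, hgpy, hz, hzpy, hxy,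
    hpxlx, hpxly, hpylx, hpyly, hpxpy, hgpylx, hgpyly, hgpypy, hgpypx, hzlx, hzly, hzpx,
    hsinkx, hsinky, hinx, hiny, hinpy, hinpx, houtpy, houtpx,
    hpxV, hpyV, hgpyV, hzV, hlx.1, hly.1, ?_, ?_, ?_, ?_⟩⟩
  · rw [hred, h2V, h1V]; rfl
  · rw [hred, h2tax, h1tax]; rfl
  · rw [hred, h2lab, h1lab]; rfl
  · intro e
    rw [hred, h2E e]
    constructor
    · rintro (⟨heM2, hh1, hh2⟩ | rfl)
      · rcases (h1E e).mp heM2 with ⟨heM1, hh3, hh4⟩ | rfl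
        · exact Or.inl ⟨((hM1E e).mp heM1).2, hh3, hh4, hh1, hh2⟩
        · exact Or.inr (Or.inl rfl)
      · exact Or.inr (Or.inr rfl)
    · rintro (⟨heE, hh1, hh2, hh3, hh4⟩ | rfl | rfl)
      · exact Or.inl ⟨(h1E e).mpr (Or.inl
          ⟨(hM1E e).mpr ⟨fun hh => hh1 (congrArg Prod.fst hh), heE⟩, hh1, hh2⟩), hh3, hh4⟩
      · exact Or.inl ⟨(h1E _).mpr (Or.inr rfl), hgpypx, hlypx⟩
      · exact Or.inr rfl

end Network

namespace Network

variable {X : Type}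

lemma guest_cherry_case {N' N : Network X} {c : X × X} {f : ℕ → ℕ} {g : ℕ × ℕ → List ℕ}
    (D' : CherryData N' c)
    (hemb : IsEmbedding (N'.reducePair c) (N.reducePair c) f g)
    (hN' : N'.IsPhylo)
    (hlabc : (N.reducePair c).label = N.label)
    (hVc : (N.reducePair c).V ⊆ N.V)
    (P A : ℕ) (πx πy : List ℕ)
    (hPV : P ∈ N.V) (hlxV : N.label c.1 ∈ N.V)
    (hfP : ∀ v ∈ (N'.reducePair c).V, f v ≠ P)
    (hflx : ∀ v ∈ (N'.reducePair c).V, f v ≠ N.label c.1)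
    (hlxP : N.label c.1 ≠ P)
    (hπx : N.IsDipath πx) (hπxh : πx.head? = some P)
    (hπxl : πx.getLast? = some (N.label c.1))
    (hπy : N.IsDipath πy) (hπyh : πy.head? = some P)
    (hπyl : πy.getLast? = some (N.label c.2))
    (hνx : ∀ q ∈ pathEdges πx, q ∉ (N.reducePair c).E)
    (hνy : ∀ q ∈ pathEdges πy, q ∉ (N.reducePair c).E)
    (hAP : (A, P) ∉ (N.reducePair c).E)
    (hdxy : ∀ q ∈ pathEdges πx, q ∉ pathEdges πy)
    (hdxA : (A, P) ∉ pathEdges πx)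
    (hdyA : (A, P) ∉ pathEdges πy)
    (hinly : ∀ e ∈ (N.reducePair c).E, e.2 = N.label c.2 → e = (A, N.label c.2))
    (hsinkly : ∀ e ∈ (N.reducePair c).E, e.1 ≠ N.label c.2)
    (hmid : ∀ e ∈ (N.reducePair c).E, (∃ e' ∈ (N.reducePair c).E, e'.1 = e.2) → e ∈ N.E)
    (hlastN : ∀ e ∈ (N.reducePair c).E, e.2 ≠ N.label c.2 → e.2 = N.label c.1 ∨ e ∈ N.E)
    (hAPN : (A, P) ∈ N.E) :
    IsSubnetwork N' N := by
  classical
  obtain ⟨hf1, hf2, hf3, hf4, hf5⟩ := hemb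
  have hNE' := hN'.2.2.2.1
  have hinjl' := hN'.2.2.2.2.1
  have hlableaf' := hN'.2.2.2.2.2.1
  have hlyV'c : N'.label c.2 ∈ (N'.reducePair c).V := by
    rw [D'.hV]
    exact Finset.mem_erase.mpr ⟨fun hh => D'.hply hh.symm,
      Finset.mem_erase.mpr ⟨fun hh => D'.hxy hh.symm, D'.hlyV⟩⟩
  have hgpV'c : D'.gp ∈ (N'.reducePair c).V := by
    rw [D'.hV]
    exact Finset.mem_erase.mpr ⟨D'.hgpp, Finset.mem_erase.mpr ⟨D'.hgplx, D'.hgpV⟩⟩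
  have hfly : f (N'.label c.2) = N.label c.2 := by
    have h2 := hf3 c.2 (by rw [D'.htax]; exact Finset.mem_erase.mpr ⟨fun hh => D'.hccne hh.symm, D'.hy⟩)
    rw [D'.hlab, hlabc] at h2
    exact h2
  have hfgp : f D'.gp ≠ N.label c.2 := by
    intro hh
    exact D'.hgply (hf2 (Finset.mem_coe.mpr hgpV'c) (Finset.mem_coe.mpr hlyV'c)
      (hh.trans hfly.symm))
  have hlast1 : (g (D'.gp, N'.label c.2)).getLast? = some (N.label c.2) := by
    rw [(hf4 _ D'.hmem).2.2]
    exact congrArg some hfly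
  have hheadne : (g (D'.gp, N'.label c.2)).head? ≠ some (N.label c.2) := by
    rw [(hf4 _ D'.hmem).2.1]
    intro hh
    exact hfgp (Option.some.inj hh)
  have hs := surgery (N := N) hinly hsinkly hmid hAPN (g (D'.gp, N'.label c.2))
    (hf4 _ D'.hmem).1 hlast1 hheadne
  set F : ℕ → ℕ := fun v => if v = N'.label c.1 then N.label c.1
    else if v = D'.p then P else f v with hFdef
  set G : ℕ × ℕ → List ℕ := fun e => if e = (D'.p, N'.label c.1) then πx
    else if e = (D'.p, N'.label c.2) then πy
    else if e = (D'.gp, D'.p) then (g (D'.gp, N'.label c.2)).dropLast ++ [P]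
    else g e with hGdef
  set τ : ℕ × ℕ → Option (ℕ × ℕ) := fun e => if e = (D'.p, N'.label c.1) then none
    else if e = (D'.p, N'.label c.2) then none
    else if e = (D'.gp, D'.p) then some (D'.gp, N'.label c.2) else some e with hτdef
  set ν : ℕ × ℕ → List (ℕ × ℕ) := fun e => if e = (D'.p, N'.label c.1) then pathEdges πx
    else if e = (D'.p, N'.label c.2) then pathEdges πy
    else if e = (D'.gp, D'.p) then [(A, P)] else [] with hνdef
  have hne21 : (D'.p, N'.label c.2) ≠ (D'.p, N'.label c.1) := by
    simp [Prod.ext_iff]; exact fun hh => D'.hxy hh.symm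
  have hne31 : (D'.gp, D'.p) ≠ (D'.p, N'.label c.1) := by
    simp [Prod.ext_iff]; intro hh; exact absurd hh D'.hgpp
  have hne32 : (D'.gp, D'.p) ≠ (D'.p, N'.label c.2) := by
    simp [Prod.ext_iff]; intro hh; exact absurd hh D'.hgpp
  have hF1 : F (N'.label c.1) = N.label c.1 := by simp [hFdef]
  have hFp : F D'.p = P := by simp [hFdef, D'.hplx]
  have hFo : ∀ v, v ≠ N'.label c.1 → v ≠ D'.p → F v = f v := by
    intro v h1 h2; simp [hFdef, h1, h2]
  have hG1 : G (D'.p, N'.label c.1) = πx := by simp [hGdef]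
  have hG2 : G (D'.p, N'.label c.2) = πy := by simp [hGdef, hne21]
  have hG3 : G (D'.gp, D'.p) = (g (D'.gp, N'.label c.2)).dropLast ++ [P] := by
    simp [hGdef, hne31, hne32]
  have hGo : ∀ e, e ≠ (D'.p, N'.label c.1) → e ≠ (D'.p, N'.label c.2) →
      e ≠ (D'.gp, D'.p) → G e = g e := by
    intro e h1 h2 h3; simp [hGdef, h1, h2, h3]
  have hτ1 : τ (D'.p, N'.label c.1) = none := by simp [hτdef]
  have hτ2 : τ (D'.p, N'.label c.2) = none := by simp [hτdef, hne21]
  have hτ3 : τ (D'.gp, D'.p) = some (D'.gp, N'.label c.2) := by simp [hτdef, hne31, hne32]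
  have hτo : ∀ e, e ≠ (D'.p, N'.label c.1) → e ≠ (D'.p, N'.label c.2) →
      e ≠ (D'.gp, D'.p) → τ e = some e := by
    intro e h1 h2 h3; simp [hτdef, h1, h2, h3]
  have hν1 : ν (D'.p, N'.label c.1) = pathEdges πx := by simp [hνdef]
  have hν2 : ν (D'.p, N'.label c.2) = pathEdges πy := by simp [hνdef, hne21]
  have hν3 : ν (D'.gp, D'.p) = [(A, P)] := by simp [hνdef, hne31, hne32]
  have hνo : ∀ e, e ≠ (D'.p, N'.label c.1) → e ≠ (D'.p, N'.label c.2) →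
      e ≠ (D'.gp, D'.p) → ν e = [] := by
    intro e h1 h2 h3; simp [hνdef, h1, h2, h3]
  have hmemV : ∀ w ∈ N'.V, w ≠ N'.label c.1 → w ≠ D'.p → w ∈ (N'.reducePair c).V := by
    intro w hw hw1 hw2
    rw [D'.hV]
    exact Finset.mem_erase.mpr ⟨hw2, Finset.mem_erase.mpr ⟨hw1, hw⟩⟩
  refine extend_embedding (F := F) (G := G) (τ := τ) (ν := ν)
    ⟨hf1, hf2, hf3, hf4, hf5⟩ ?_ ?_ ?_ ?_ ?_ ?_ ?_ ?_
  -- hV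
  · intro v hv
    by_cases h1 : v = N'.label c.1
    · rw [h1, hF1]; exact hlxV
    by_cases h2 : v = D'.p
    · rw [h2, hFp]; exact hPV
    rw [hFo v h1 h2]
    exact hVc (hf1 v (hmemV v hv h1 h2))
  -- hinj
  · intro u hu v hv huv
    have hu' : u ∈ N'.V := Finset.mem_coe.mp hu
    have hv' : v ∈ N'.V := Finset.mem_coe.mp hv
    by_cases h1 : u = N'.label c.1 <;> by_cases h2 : v = N'.label c.1
    · rw [h1, h2]
    · rw [h1, hF1] at huv
      by_cases h3 : v = D'.p
      · rw [h3, hFp] at huv; exact absurd huv hlxP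
      · rw [hFo v h2 h3] at huv
        exact absurd huv.symm (hflx v (hmemV v hv' h2 h3))
    · rw [h2, hF1] at huv
      by_cases h3 : u = D'.p
      · rw [h3, hFp] at huv; exact absurd huv.symm hlxP
      · rw [hFo u h1 h3] at huv
        exact absurd huv (hflx u (hmemV u hu' h1 h3))
    by_cases h3 : u = D'.p <;> by_cases h4 : v = D'.p
    · rw [h3, h4]
    · rw [h3, hFp, hFo v h2 h4] at huv
      exact absurd huv.symm (hfP v (hmemV v hv' h2 h4))
    · rw [h4, hFp, hFo u h1 h3] at huv
      exact absurd huv (hfP u (hmemV u hu' h1 h3))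
    · rw [hFo u h1 h3, hFo v h2 h4] at huv
      exact hf2 (Finset.mem_coe.mpr (hmemV u hu' h1 h3))
        (Finset.mem_coe.mpr (hmemV v hv' h2 h4)) huv
  -- hlab
  · intro t ht
    by_cases h1 : t = c.1
    · rw [h1]; exact hF1
    · have hlt := hlableaf' t ht
      have ht1 : N'.label t ≠ N'.label c.1 := fun hh =>
        h1 (hinjl' (Finset.mem_coe.mpr ht) (Finset.mem_coe.mpr D'.hx) hh)
      have ht2 : N'.label t ≠ D'.p := fun hh =>
        (sink_of_outdeg_zero hlt.2.2 _ D'.hpx) hh.symm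
      rw [hFo _ ht1 ht2]
      have h2 := hf3 t (by rw [D'.htax]; exact Finset.mem_erase.mpr ⟨h1, ht⟩)
      rw [D'.hlab, hlabc] at h2
      exact h2
  -- hpath
  · intro e he
    rcases D'.hsplit e he with rfl | rfl | rfl | ⟨heC, hA1, hA2, hB1, hB2, hB3⟩
    · refine ⟨by rw [hG1]; exact hπx, ?_, ?_⟩
      · rw [hG1]; show πx.head? = some (F D'.p); rw [hFp]; exact hπxh
      · rw [hG1]; show πx.getLast? = some (F (N'.label c.1)); rw [hF1]; exact hπxl
    · refine ⟨by rw [hG2]; exact hπy, ?_, ?_⟩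
      · rw [hG2]; show πy.head? = some (F D'.p); rw [hFp]; exact hπyh
      · rw [hG2]; show πy.getLast? = some (F (N'.label c.2))
        rw [hFo _ (fun hh => D'.hxy hh.symm) (fun hh => D'.hply hh.symm), hfly]
        exact hπyl
    · refine ⟨by rw [hG3]; exact hs.1, ?_, ?_⟩
      · rw [hG3]; show _ = some (F D'.gp)
        rw [hFo _ D'.hgplx D'.hgpp, hs.2.1, (hf4 _ D'.hmem).2.1]
      · rw [hG3]; show _ = some (F D'.p)
        rw [hFp]; exact hs.2.2.1
    · have hne1 : e ≠ (D'.p, N'.label c.1) := fun hh => hA2 (congrArg Prod.fst hh)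
      have hne2 : e ≠ (D'.p, N'.label c.2) := fun hh => hA2 (congrArg Prod.fst hh)
      have hne3 : e ≠ (D'.gp, D'.p) := fun hh => hB2 (congrArg Prod.snd hh)
      rw [hGo e hne1 hne2 hne3]
      have he2V : e.2 ∈ (N'.reducePair c).V := hmemV e.2 (hNE' e he).2 hB1 hB2
      refine ⟨?_, ?_, ?_⟩
      · refine dipath_transfer hmid _ (hf4 e heC).1 ?_
        intro u v huv hv
        have hvfe : v = f e.2 := by
          have hl := (hf4 e heC).2.2
          rw [hl] at hv
          exact (Option.some.inj hv).symm
        have hvly : v ≠ N.label c.2 := by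
          rw [hvfe]
          intro hh
          exact hB3 (hf2 (Finset.mem_coe.mpr he2V) (Finset.mem_coe.mpr hlyV'c)
            (hh.trans hfly.symm))
        rcases hlastN (u, v) huv hvly with h | h
        · exact absurd (by rw [← hvfe]; exact h) (hflx e.2 he2V)
        · exact h
      · rw [hFo e.1 hA1 hA2]; exact (hf4 e heC).2.1
      · rw [hFo e.2 hB1 hB2]; exact (hf4 e heC).2.2
  -- hdecomp
  · intro e he q hq
    rcases D'.hsplit e he with rfl | rfl | rfl | ⟨heC, hA1, hA2, hB1, hB2, hB3⟩
    · rw [hG1] at hq; exact Or.inr (by rw [hν1]; exact hq)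
    · rw [hG2] at hq; exact Or.inr (by rw [hν2]; exact hq)
    · rw [hG3] at hq
      rcases hs.2.2.2 q hq with h | h
      · exact Or.inl ⟨(D'.gp, N'.label c.2), hτ3, D'.hmem, h⟩
      · exact Or.inr (by rw [hν3, h]; exact List.mem_singleton_self _)
    · have hne1 : e ≠ (D'.p, N'.label c.1) := fun hh => hA2 (congrArg Prod.fst hh)
      have hne2 : e ≠ (D'.p, N'.label c.2) := fun hh => hA2 (congrArg Prod.fst hh)
      have hne3 : e ≠ (D'.gp, D'.p) := fun hh => hB2 (congrArg Prod.snd hh)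
      rw [hGo e hne1 hne2 hne3] at hq
      exact Or.inl ⟨e, hτo e hne1 hne2 hne3, heC, hq⟩
  -- hτ
  · have hτchar : ∀ e ∈ N'.E, ∀ a, τ e = some a →
        (e = (D'.gp, D'.p) ∧ a = (D'.gp, N'.label c.2)) ∨ a = e := by
      intro e he a h
      rcases D'.hsplit e he with rfl | rfl | rfl | ⟨heC, hA1, hA2, hB1, hB2, hB3⟩
      · rw [hτ1] at h; exact absurd h (by simp)
      · rw [hτ2] at h; exact absurd h (by simp)
      · rw [hτ3] at h; exact Or.inl ⟨rfl, (Option.some.inj h).symm⟩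
      · have hne1 : e ≠ (D'.p, N'.label c.1) := fun hh => hA2 (congrArg Prod.fst hh)
        have hne2 : e ≠ (D'.p, N'.label c.2) := fun hh => hA2 (congrArg Prod.fst hh)
        have hne3 : e ≠ (D'.gp, D'.p) := fun hh => hB2 (congrArg Prod.snd hh)
        rw [hτo e hne1 hne2 hne3] at h
        exact Or.inr (Option.some.inj h).symm
    intro e he e2 he2 hne a h1 h2
    rcases hτchar e he a h1 with ⟨he3, ha⟩ | ha <;> rcases hτchar e2 he2 a h2 with ⟨he4, ha2⟩ | ha2
    · exact hne (he3.trans he4.symm)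
    · exact D'.hnot ((ha2.symm.trans ha) ▸ he2)
    · exact D'.hnot ((ha.symm.trans ha2) ▸ he)
    · exact hne (ha.symm.trans ha2)
  -- hν
  · intro e he q hq
    rcases D'.hsplit e he with rfl | rfl | rfl | ⟨heC, hA1, hA2, hB1, hB2, hB3⟩
    · rw [hν1] at hq; exact hνx q hq
    · rw [hν2] at hq; exact hνy q hq
    · rw [hν3, List.mem_singleton] at hq; rw [hq]; exact hAP
    · have hne1 : e ≠ (D'.p, N'.label c.1) := fun hh => hA2 (congrArg Prod.fst hh)
      have hne2 : e ≠ (D'.p, N'.label c.2) := fun hh => hA2 (congrArg Prod.fst hh)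
      have hne3 : e ≠ (D'.gp, D'.p) := fun hh => hB2 (congrArg Prod.snd hh)
      rw [hνo e hne1 hne2 hne3] at hq
      exact absurd hq (List.not_mem_nil (a := q))
  -- hνd
  · intro e he e2 he2 hne q hq hq2
    rcases D'.hsplit e he with rfl | rfl | rfl | ⟨heC, hA1, hA2, hB1, hB2, hB3⟩
    case _ =>
      rw [hν1] at hq
      rcases D'.hsplit e2 he2 with rfl | rfl | rfl | ⟨heC2, hC1, hC2, hD1, hD2, hD3⟩
      · exact hne rfl
      · rw [hν2] at hq2; exact hdxy q hq hq2
      · rw [hν3, List.mem_singleton] at hq2; rw [hq2] at hq; exact hdxA hq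
      · have hne1 : e2 ≠ (D'.p, N'.label c.1) := fun hh => hC2 (congrArg Prod.fst hh)
        have hne2 : e2 ≠ (D'.p, N'.label c.2) := fun hh => hC2 (congrArg Prod.fst hh)
        have hne3 : e2 ≠ (D'.gp, D'.p) := fun hh => hD2 (congrArg Prod.snd hh)
        rw [hνo e2 hne1 hne2 hne3] at hq2
        exact absurd hq2 (List.not_mem_nil (a := q))
    case _ =>
      rw [hν2] at hq
      rcases D'.hsplit e2 he2 with rfl | rfl | rfl | ⟨heC2, hC1, hC2, hD1, hD2, hD3⟩
      · rw [hν1] at hq2; exact hdxy q hq2 hq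
      · exact hne rfl
      · rw [hν3, List.mem_singleton] at hq2; rw [hq2] at hq; exact hdyA hq
      · have hne1 : e2 ≠ (D'.p, N'.label c.1) := fun hh => hC2 (congrArg Prod.fst hh)
        have hne2 : e2 ≠ (D'.p, N'.label c.2) := fun hh => hC2 (congrArg Prod.fst hh)
        have hne3 : e2 ≠ (D'.gp, D'.p) := fun hh => hD2 (congrArg Prod.snd hh)
        rw [hνo e2 hne1 hne2 hne3] at hq2
        exact absurd hq2 (List.not_mem_nil (a := q))
    case _ =>
      rw [hν3, List.mem_singleton] at hq
      rcases D'.hsplit e2 he2 with rfl | rfl | rfl | ⟨heC2, hC1, hC2, hD1, hD2, hD3⟩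
      · rw [hν1] at hq2; rw [hq] at hq2; exact hdxA hq2
      · rw [hν2] at hq2; rw [hq] at hq2; exact hdyA hq2
      · exact hne rfl
      · have hne1 : e2 ≠ (D'.p, N'.label c.1) := fun hh => hC2 (congrArg Prod.fst hh)
        have hne2 : e2 ≠ (D'.p, N'.label c.2) := fun hh => hC2 (congrArg Prod.fst hh)
        have hne3 : e2 ≠ (D'.gp, D'.p) := fun hh => hD2 (congrArg Prod.snd hh)
        rw [hνo e2 hne1 hne2 hne3] at hq2
        exact absurd hq2 (List.not_mem_nil (a := q))
    case _ =>
      have hne1 : e ≠ (D'.p, N'.label c.1) := fun hh => hA2 (congrArg Prod.fst hh)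
      have hne2 : e ≠ (D'.p, N'.label c.2) := fun hh => hA2 (congrArg Prod.fst hh)
      have hne3 : e ≠ (D'.gp, D'.p) := fun hh => hB2 (congrArg Prod.snd hh)
      rw [hνo e hne1 hne2 hne3] at hq
      exact absurd hq (List.not_mem_nil (a := q))

end Network

namespace Network

variable {X : Type}

lemma retic_retic_case {N' N : Network X} {c : X × X} {f : ℕ → ℕ} {g : ℕ × ℕ → List ℕ}
    (D' : ReticData N' c) (D : ReticData N c)
    (hemb : IsEmbedding (N'.reducePair c) (N.reducePair c) f g)
    (hN' : N'.IsPhylo) :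
    IsSubnetwork N' N := by
  classical
  obtain ⟨hf1, hf2, hf3, hf4, hf5⟩ := hemb
  have hNE' := hN'.2.2.2.1
  have hlableaf' := hN'.2.2.2.2.2.1
  -- host facts
  have hVc : (N.reducePair c).V ⊆ N.V := by
    intro v hv
    rw [D.hV] at hv
    exact (Finset.mem_erase.mp (Finset.mem_erase.mp hv).2).2
  have hfpy : ∀ v ∈ (N'.reducePair c).V, f v ≠ D.py := by
    intro v hv
    have h := hf1 v hv
    rw [D.hV] at h
    exact (Finset.mem_erase.mp (Finset.mem_erase.mp h).2).1
  have hfpx : ∀ v ∈ (N'.reducePair c).V, f v ≠ D.px := by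
    intro v hv
    have h := hf1 v hv
    rw [D.hV] at h
    exact (Finset.mem_erase.mp h).1
  have hsinklyc : ∀ e ∈ (N.reducePair c).E, e.1 ≠ N.label c.2 := by
    intro e he
    rcases (D.hE e).mp he with ⟨heE, _, _, _, _⟩ | rfl | rfl
    · exact D.hsinky e heE
    · exact D.hgpyly
    · exact D.hzly
  have hsinklxc : ∀ e ∈ (N.reducePair c).E, e.1 ≠ N.label c.1 := by
    intro e he
    rcases (D.hE e).mp he with ⟨heE, _, _, _, _⟩ | rfl | rfl
    · exact D.hsinkx e heE
    · exact D.hgpylx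
    · exact D.hzlx
  have hinlyc : ∀ e ∈ (N.reducePair c).E, e.2 = N.label c.2 → e = (D.gpy, N.label c.2) := by
    intro e he h2
    rcases (D.hE e).mp he with ⟨heE, h1, _, _, _⟩ | rfl | rfl
    · exact absurd (congrArg Prod.fst (D.hiny e heE h2)) h1
    · rfl
    · exact absurd h2 (fun hh => D.hxy hh)
  have hinlxc : ∀ e ∈ (N.reducePair c).E, e.2 = N.label c.1 → e = (D.z, N.label c.1) := by
    intro e he h2
    rcases (D.hE e).mp he with ⟨heE, _, _, h1, _⟩ | rfl | rfl
    · exact absurd (congrArg Prod.fst (D.hinx e heE h2)) h1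
    · exact absurd h2 (fun hh => D.hxy hh.symm)
    · rfl
  have hmid : ∀ e ∈ (N.reducePair c).E, (∃ e' ∈ (N.reducePair c).E, e'.1 = e.2) → e ∈ N.E := by
    intro e he hsucc
    rcases (D.hE e).mp he with ⟨heE, _, _, _, _⟩ | rfl | rfl
    · exact heE
    · obtain ⟨e', he', h1⟩ := hsucc
      exact absurd h1 (hsinklyc e' he')
    · obtain ⟨e', he', h1⟩ := hsucc
      exact absurd h1 (hsinklxc e' he')
  have hn1 : (D.py, N.label c.2) ∉ (N.reducePair c).E := by
    intro h
    rcases (D.hE _).mp h with ⟨_, h1, _, _, _⟩ | h2 | h2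
    · exact h1 rfl
    · exact D.hgpypy (congrArg Prod.fst h2).symm
    · exact D.hxy (congrArg Prod.snd h2).symm
  have hn2 : (D.py, D.px) ∉ (N.reducePair c).E := by
    intro h
    rcases (D.hE _).mp h with ⟨_, h1, _, _, _⟩ | h2 | h2
    · exact h1 rfl
    · exact D.hgpypy (congrArg Prod.fst h2).symm
    · exact D.hzpy (congrArg Prod.fst h2).symm
  have hn3 : (D.px, N.label c.1) ∉ (N.reducePair c).E := by
    intro h
    rcases (D.hE _).mp h with ⟨_, _, _, h1, _⟩ | h2 | h2
    · exact h1 rfl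
    · exact D.hxy (congrArg Prod.snd h2)
    · exact D.hzpx (congrArg Prod.fst h2).symm
  have hn4 : (D.gpy, D.py) ∉ (N.reducePair c).E := by
    intro h
    rcases (D.hE _).mp h with ⟨_, _, h1, _, _⟩ | h2 | h2
    · exact h1 rfl
    · exact D.hpyly (congrArg Prod.snd h2)
    · exact D.hpylx (congrArg Prod.snd h2)
  have hn5 : (D.z, D.px) ∉ (N.reducePair c).E := by
    intro h
    rcases (D.hE _).mp h with ⟨_, _, _, _, h1⟩ | h2 | h2
    · exact h1 rfl
    · exact D.hpxly (congrArg Prod.snd h2)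
    · exact D.hpxlx (congrArg Prod.snd h2)
  -- guest memberships
  have hmemV : ∀ w ∈ N'.V, w ≠ D'.py → w ≠ D'.px → w ∈ (N'.reducePair c).V := by
    intro w hw h1 h2
    rw [D'.hV]
    exact Finset.mem_erase.mpr ⟨h2, Finset.mem_erase.mpr ⟨h1, hw⟩⟩
  have hlx'm : N'.label c.1 ∈ (N'.reducePair c).V :=
    hmemV _ D'.hlxV (Ne.symm D'.hpylx) (Ne.symm D'.hpxlx)
  have hly'm : N'.label c.2 ∈ (N'.reducePair c).V :=
    hmemV _ D'.hlyV (Ne.symm D'.hpyly) (Ne.symm D'.hpxly)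
  have hgpy'm : D'.gpy ∈ (N'.reducePair c).V := hmemV _ D'.hgpyV D'.hgpypy D'.hgpypx
  have hz'm : D'.z ∈ (N'.reducePair c).V := hmemV _ D'.hzV D'.hzpy D'.hzpx
  have hflx : f (N'.label c.1) = N.label c.1 := by
    have h2 := hf3 c.1 (by rw [D'.htax]; exact D'.hx)
    rw [D'.hlab, D.hlab] at h2
    exact h2
  have hfly : f (N'.label c.2) = N.label c.2 := by
    have h2 := hf3 c.2 (by rw [D'.htax]; exact D'.hy)
    rw [D'.hlab, D.hlab] at h2
    exact h2
  -- surgeries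
  have hlastg1 : (g (D'.gpy, N'.label c.2)).getLast? = some (N.label c.2) := by
    rw [(hf4 _ D'.hmemgl).2.2]
    exact congrArg some hfly
  have hheadg1 : (g (D'.gpy, N'.label c.2)).head? ≠ some (N.label c.2) := by
    rw [(hf4 _ D'.hmemgl).2.1]
    intro hh
    exact D'.hgpyly (hf2 (Finset.mem_coe.mpr hgpy'm) (Finset.mem_coe.mpr hly'm)
      ((Option.some.inj hh).trans hfly.symm))
  have hs1 := surgery (N := N) hinlyc hsinklyc hmid D.hgpy (g (D'.gpy, N'.label c.2))
    (hf4 _ D'.hmemgl).1 hlastg1 hheadg1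
  have hlastg2 : (g (D'.z, N'.label c.1)).getLast? = some (N.label c.1) := by
    rw [(hf4 _ D'.hmemzl).2.2]
    exact congrArg some hflx
  have hheadg2 : (g (D'.z, N'.label c.1)).head? ≠ some (N.label c.1) := by
    rw [(hf4 _ D'.hmemzl).2.1]
    intro hh
    exact D'.hzlx (hf2 (Finset.mem_coe.mpr hz'm) (Finset.mem_coe.mpr hlx'm)
      ((Option.some.inj hh).trans hflx.symm))
  have hs2 := surgery (N := N) hinlxc hsinklxc hmid D.hz (g (D'.z, N'.label c.1))
    (hf4 _ D'.hmemzl).1 hlastg2 hheadg2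
  -- maps
  set F : ℕ → ℕ := fun v => if v = D'.py then D.py else if v = D'.px then D.px else f v
    with hFdef
  set G : ℕ × ℕ → List ℕ := fun e =>
    if e = (D'.py, N'.label c.2) then [D.py, N.label c.2]
    else if e = (D'.py, D'.px) then [D.py, D.px]
    else if e = (D'.px, N'.label c.1) then [D.px, N.label c.1]
    else if e = (D'.gpy, D'.py) then (g (D'.gpy, N'.label c.2)).dropLast ++ [D.py]
    else if e = (D'.z, D'.px) then (g (D'.z, N'.label c.1)).dropLast ++ [D.px]
    else g e with hGdef
  set τ : ℕ × ℕ → Option (ℕ × ℕ) := fun e =>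
    if e = (D'.py, N'.label c.2) then none
    else if e = (D'.py, D'.px) then none
    else if e = (D'.px, N'.label c.1) then none
    else if e = (D'.gpy, D'.py) then some (D'.gpy, N'.label c.2)
    else if e = (D'.z, D'.px) then some (D'.z, N'.label c.1)
    else some e with hτdef
  set ν : ℕ × ℕ → List (ℕ × ℕ) := fun e =>
    if e = (D'.py, N'.label c.2) then [(D.py, N.label c.2)]
    else if e = (D'.py, D'.px) then [(D.py, D.px)]
    else if e = (D'.px, N'.label c.1) then [(D.px, N.label c.1)]
    else if e = (D'.gpy, D'.py) then [(D.gpy, D.py)]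
    else if e = (D'.z, D'.px) then [(D.z, D.px)]
    else [] with hνdef
  -- special edge distinctness (guest side)
  have hs21 : (D'.py, D'.px) ≠ (D'.py, N'.label c.2) :=
    fun hh => D'.hpxly (congrArg Prod.snd hh)
  have hs31 : (D'.px, N'.label c.1) ≠ (D'.py, N'.label c.2) :=
    fun hh => D'.hpxpy (congrArg Prod.fst hh)
  have hs32 : (D'.px, N'.label c.1) ≠ (D'.py, D'.px) :=
    fun hh => D'.hpxpy (congrArg Prod.fst hh)
  have hs41 : (D'.gpy, D'.py) ≠ (D'.py, N'.label c.2) :=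
    fun hh => D'.hpyly (congrArg Prod.snd hh)
  have hs42 : (D'.gpy, D'.py) ≠ (D'.py, D'.px) :=
    fun hh => D'.hpxpy (congrArg Prod.snd hh).symm
  have hs43 : (D'.gpy, D'.py) ≠ (D'.px, N'.label c.1) :=
    fun hh => D'.hgpypx (congrArg Prod.fst hh)
  have hs51 : (D'.z, D'.px) ≠ (D'.py, N'.label c.2) :=
    fun hh => D'.hzpy (congrArg Prod.fst hh)
  have hs52 : (D'.z, D'.px) ≠ (D'.py, D'.px) :=
    fun hh => D'.hzpy (congrArg Prod.fst hh)
  have hs53 : (D'.z, D'.px) ≠ (D'.px, N'.label c.1) :=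
    fun hh => D'.hzpx (congrArg Prod.fst hh)
  have hs54 : (D'.z, D'.px) ≠ (D'.gpy, D'.py) :=
    fun hh => D'.hpxpy (congrArg Prod.snd hh)
  -- host new-edge distinctness
  have hm12 : (D.py, N.label c.2) ≠ (D.py, D.px) := fun hh => D.hpxly (congrArg Prod.snd hh).symm
  have hm13 : (D.py, N.label c.2) ≠ (D.px, N.label c.1) := fun hh => D.hpxpy (congrArg Prod.fst hh).symm
  have hm14 : (D.py, N.label c.2) ≠ (D.gpy, D.py) := fun hh => D.hgpypy (congrArg Prod.fst hh).symm
  have hm15 : (D.py, N.label c.2) ≠ (D.z, D.px) := fun hh => D.hzpy (congrArg Prod.fst hh).symm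
  have hm23 : (D.py, D.px) ≠ (D.px, N.label c.1) := fun hh => D.hpxpy (congrArg Prod.fst hh).symm
  have hm24 : (D.py, D.px) ≠ (D.gpy, D.py) := fun hh => D.hgpypy (congrArg Prod.fst hh).symm
  have hm25 : (D.py, D.px) ≠ (D.z, D.px) := fun hh => D.hzpy (congrArg Prod.fst hh).symm
  have hm34 : (D.px, N.label c.1) ≠ (D.gpy, D.py) := fun hh => D.hgpypx (congrArg Prod.fst hh).symm
  have hm35 : (D.px, N.label c.1) ≠ (D.z, D.px) := fun hh => D.hzpx (congrArg Prod.fst hh).symm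
  have hm45 : (D.gpy, D.py) ≠ (D.z, D.px) := fun hh => D.hpxpy (congrArg Prod.snd hh).symm
  -- eval lemmas
  have hFpy : F D'.py = D.py := by simp [hFdef]
  have hFpx : F D'.px = D.px := by simp [hFdef, D'.hpxpy]
  have hFo : ∀ v, v ≠ D'.py → v ≠ D'.px → F v = f v := by
    intro v h1 h2; simp [hFdef, h1, h2]
  have hG1 : G (D'.py, N'.label c.2) = [D.py, N.label c.2] := by simp [hGdef]
  have hG2 : G (D'.py, D'.px) = [D.py, D.px] := by simp [hGdef, hs21]
  have hG3 : G (D'.px, N'.label c.1) = [D.px, N.label c.1] := by simp [hGdef, hs31, hs32]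
  have hG4 : G (D'.gpy, D'.py) = (g (D'.gpy, N'.label c.2)).dropLast ++ [D.py] := by
    simp [hGdef, hs41, hs42, hs43]
  have hG5 : G (D'.z, D'.px) = (g (D'.z, N'.label c.1)).dropLast ++ [D.px] := by
    simp [hGdef, hs51, hs52, hs53, hs54]
  have hGo : ∀ e, e ≠ (D'.py, N'.label c.2) → e ≠ (D'.py, D'.px) →
      e ≠ (D'.px, N'.label c.1) → e ≠ (D'.gpy, D'.py) → e ≠ (D'.z, D'.px) → G e = g e := by
    intro e h1 h2 h3 h4 h5; simp [hGdef, h1, h2, h3, h4, h5]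
  have hτ1 : τ (D'.py, N'.label c.2) = none := by simp [hτdef]
  have hτ2 : τ (D'.py, D'.px) = none := by simp [hτdef, hs21]
  have hτ3 : τ (D'.px, N'.label c.1) = none := by simp [hτdef, hs31, hs32]
  have hτ4 : τ (D'.gpy, D'.py) = some (D'.gpy, N'.label c.2) := by simp [hτdef, hs41, hs42, hs43]
  have hτ5 : τ (D'.z, D'.px) = some (D'.z, N'.label c.1) := by
    simp [hτdef, hs51, hs52, hs53, hs54]
  have hτo : ∀ e, e ≠ (D'.py, N'.label c.2) → e ≠ (D'.py, D'.px) →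
      e ≠ (D'.px, N'.label c.1) → e ≠ (D'.gpy, D'.py) → e ≠ (D'.z, D'.px) → τ e = some e := by
    intro e h1 h2 h3 h4 h5; simp [hτdef, h1, h2, h3, h4, h5]
  have hν1 : ν (D'.py, N'.label c.2) = [(D.py, N.label c.2)] := by simp [hνdef]
  have hν2 : ν (D'.py, D'.px) = [(D.py, D.px)] := by simp [hνdef, hs21]
  have hν3 : ν (D'.px, N'.label c.1) = [(D.px, N.label c.1)] := by simp [hνdef, hs31, hs32]
  have hν4 : ν (D'.gpy, D'.py) = [(D.gpy, D.py)] := by simp [hνdef, hs41, hs42, hs43]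
  have hν5 : ν (D'.z, D'.px) = [(D.z, D.px)] := by simp [hνdef, hs51, hs52, hs53, hs54]
  have hνo : ∀ e, e ≠ (D'.py, N'.label c.2) → e ≠ (D'.py, D'.px) →
      e ≠ (D'.px, N'.label c.1) → e ≠ (D'.gpy, D'.py) → e ≠ (D'.z, D'.px) → ν e = [] := by
    intro e h1 h2 h3 h4 h5; simp [hνdef, h1, h2, h3, h4, h5]
  have hgen : ∀ e : ℕ × ℕ, e.1 ≠ D'.py → e.1 ≠ D'.px → e.2 ≠ D'.py → e.2 ≠ D'.px →
      e ≠ (D'.py, N'.label c.2) ∧ e ≠ (D'.py, D'.px) ∧ e ≠ (D'.px, N'.label c.1) ∧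
      e ≠ (D'.gpy, D'.py) ∧ e ≠ (D'.z, D'.px) := by
    intro e h1 h2 h3 h4
    exact ⟨fun hh => h1 (congrArg Prod.fst hh), fun hh => h1 (congrArg Prod.fst hh),
      fun hh => h2 (congrArg Prod.fst hh), fun hh => h3 (congrArg Prod.snd hh),
      fun hh => h4 (congrArg Prod.snd hh)⟩
  refine extend_embedding (F := F) (G := G) (τ := τ) (ν := ν)
    ⟨hf1, hf2, hf3, hf4, hf5⟩ ?_ ?_ ?_ ?_ ?_ ?_ ?_ ?_
  -- hV
  · intro v hv
    by_cases h1 : v = D'.py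
    · rw [h1, hFpy]; exact D.hpyV
    by_cases h2 : v = D'.px
    · rw [h2, hFpx]; exact D.hpxV
    rw [hFo v h1 h2]
    exact hVc (hf1 v (hmemV v hv h1 h2))
  -- hinj
  · intro u hu v hv huv
    have hu' : u ∈ N'.V := Finset.mem_coe.mp hu
    have hv' : v ∈ N'.V := Finset.mem_coe.mp hv
    by_cases h1 : u = D'.py <;> by_cases h2 : v = D'.py
    · rw [h1, h2]
    · rw [h1, hFpy] at huv
      by_cases h3 : v = D'.px
      · rw [h3, hFpx] at huv; exact absurd huv.symm D.hpxpy
      · rw [hFo v h2 h3] at huv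
        exact absurd huv.symm (hfpy v (hmemV v hv' h2 h3))
    · rw [h2, hFpy] at huv
      by_cases h3 : u = D'.px
      · rw [h3, hFpx] at huv; exact absurd huv D.hpxpy
      · rw [hFo u h1 h3] at huv
        exact absurd huv (hfpy u (hmemV u hu' h1 h3))
    by_cases h3 : u = D'.px <;> by_cases h4 : v = D'.px
    · rw [h3, h4]
    · rw [h3, hFpx, hFo v h2 h4] at huv
      exact absurd huv.symm (hfpx v (hmemV v hv' h2 h4))
    · rw [h4, hFpx, hFo u h1 h3] at huv
      exact absurd huv (hfpx u (hmemV u hu' h1 h3))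
    · rw [hFo u h1 h3, hFo v h2 h4] at huv
      exact hf2 (Finset.mem_coe.mpr (hmemV u hu' h1 h3))
        (Finset.mem_coe.mpr (hmemV v hv' h2 h4)) huv
  -- hlab
  · intro t ht
    have hlt := hlableaf' t ht
    have ht1 : N'.label t ≠ D'.py := fun hh =>
      (sink_of_outdeg_zero hlt.2.2 _ D'.hpyy) hh.symm
    have ht2 : N'.label t ≠ D'.px := fun hh =>
      (sink_of_outdeg_zero hlt.2.2 _ D'.hpxx) hh.symm
    rw [hFo _ ht1 ht2]
    have h2 := hf3 t (by rw [D'.htax]; exact ht)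
    rw [D'.hlab, D.hlab] at h2
    exact h2
  -- hpath
  · intro e he
    rcases D'.hsplit e he with rfl | rfl | rfl | rfl | rfl | ⟨heC, hA1, hA2, hB1, hB2, hB3, hB4⟩
    · refine ⟨by rw [hG3]; simp [IsDipath, List.Chain', D.hpxx], ?_, ?_⟩
      · rw [hG3]; show _ = some (F D'.px); rw [hFpx]; rfl
      · rw [hG3]; show _ = some (F (N'.label c.1))
        rw [hFo _ (Ne.symm D'.hpylx) (Ne.symm D'.hpxlx), hflx]; rfl
    · refine ⟨by rw [hG1]; simp [IsDipath, List.Chain', D.hpyy], ?_, ?_⟩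
      · rw [hG1]; show _ = some (F D'.py); rw [hFpy]; rfl
      · rw [hG1]; show _ = some (F (N'.label c.2))
        rw [hFo _ (Ne.symm D'.hpyly) (Ne.symm D'.hpxly), hfly]; rfl
    · refine ⟨by rw [hG2]; simp [IsDipath, List.Chain', D.hpypx], ?_, ?_⟩
      · rw [hG2]; show _ = some (F D'.py); rw [hFpy]; rfl
      · rw [hG2]; show _ = some (F D'.px); rw [hFpx]; rfl
    · refine ⟨by rw [hG4]; exact hs1.1, ?_, ?_⟩
      · rw [hG4]; show _ = some (F D'.gpy)
        rw [hFo _ D'.hgpypy D'.hgpypx, hs1.2.1, (hf4 _ D'.hmemgl).2.1]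
      · rw [hG4]; show _ = some (F D'.py); rw [hFpy]; exact hs1.2.2.1
    · refine ⟨by rw [hG5]; exact hs2.1, ?_, ?_⟩
      · rw [hG5]; show _ = some (F D'.z)
        rw [hFo _ D'.hzpy D'.hzpx, hs2.2.1, (hf4 _ D'.hmemzl).2.1]
      · rw [hG5]; show _ = some (F D'.px); rw [hFpx]; exact hs2.2.2.1
    · obtain ⟨hne1, hne2, hne3, hne4, hne5⟩ := hgen e hA1 hA2 hB1 hB2
      rw [hGo e hne1 hne2 hne3 hne4 hne5]
      have he2V : e.2 ∈ (N'.reducePair c).V := hmemV e.2 (hNE' e he).2 hB1 hB2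
      refine ⟨?_, ?_, ?_⟩
      · refine dipath_transfer hmid _ (hf4 e heC).1 ?_
        intro u v huv hv
        have hvfe : v = f e.2 := by
          have hl := (hf4 e heC).2.2
          rw [hl] at hv
          exact (Option.some.inj hv).symm
        have hvly : v ≠ N.label c.2 := by
          rw [hvfe]
          intro hh
          exact hB4 (hf2 (Finset.mem_coe.mpr he2V) (Finset.mem_coe.mpr hly'm)
            (hh.trans hfly.symm))
        have hvlx : v ≠ N.label c.1 := by
          rw [hvfe]
          intro hh
          exact hB3 (hf2 (Finset.mem_coe.mpr he2V) (Finset.mem_coe.mpr hlx'm)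
            (hh.trans hflx.symm))
        rcases (D.hE (u, v)).mp huv with ⟨heE, _, _, _, _⟩ | h2 | h2
        · exact heE
        · exact absurd (congrArg Prod.snd h2) hvly
        · exact absurd (congrArg Prod.snd h2) hvlx
      · rw [hFo e.1 hA1 hA2]; exact (hf4 e heC).2.1
      · rw [hFo e.2 hB1 hB2]; exact (hf4 e heC).2.2
  -- hdecomp
  · intro e he q hq
    rcases D'.hsplit e he with rfl | rfl | rfl | rfl | rfl | ⟨heC, hA1, hA2, hB1, hB2, hB3, hB4⟩
    · rw [hG3] at hq
      have hq' : q = (D.px, N.label c.1) := by simpa [pathEdges] using hq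
      exact Or.inr (by rw [hν3, hq']; exact List.mem_singleton_self _)
    · rw [hG1] at hq
      have hq' : q = (D.py, N.label c.2) := by simpa [pathEdges] using hq
      exact Or.inr (by rw [hν1, hq']; exact List.mem_singleton_self _)
    · rw [hG2] at hq
      have hq' : q = (D.py, D.px) := by simpa [pathEdges] using hq
      exact Or.inr (by rw [hν2, hq']; exact List.mem_singleton_self _)
    · rw [hG4] at hq
      rcases hs1.2.2.2 q hq with h | h
      · exact Or.inl ⟨(D'.gpy, N'.label c.2), hτ4, D'.hmemgl, h⟩
      · exact Or.inr (by rw [hν4, h]; exact List.mem_singleton_self _)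
    · rw [hG5] at hq
      rcases hs2.2.2.2 q hq with h | h
      · exact Or.inl ⟨(D'.z, N'.label c.1), hτ5, D'.hmemzl, h⟩
      · exact Or.inr (by rw [hν5, h]; exact List.mem_singleton_self _)
    · obtain ⟨hne1, hne2, hne3, hne4, hne5⟩ := hgen e hA1 hA2 hB1 hB2
      rw [hGo e hne1 hne2 hne3 hne4 hne5] at hq
      exact Or.inl ⟨e, hτo e hne1 hne2 hne3 hne4 hne5, heC, hq⟩
  -- hτ
  · have hτchar : ∀ e ∈ N'.E, ∀ a, τ e = some a →
        (e = (D'.gpy, D'.py) ∧ a = (D'.gpy, N'.label c.2)) ∨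
        (e = (D'.z, D'.px) ∧ a = (D'.z, N'.label c.1)) ∨ a = e := by
      intro e he a h
      rcases D'.hsplit e he with rfl | rfl | rfl | rfl | rfl | ⟨heC, hA1, hA2, hB1, hB2, hB3, hB4⟩
      · rw [hτ3] at h; exact absurd h (by simp)
      · rw [hτ1] at h; exact absurd h (by simp)
      · rw [hτ2] at h; exact absurd h (by simp)
      · rw [hτ4] at h; exact Or.inl ⟨rfl, (Option.some.inj h).symm⟩
      · rw [hτ5] at h; exact Or.inr (Or.inl ⟨rfl, (Option.some.inj h).symm⟩)
      · obtain ⟨hne1, hne2, hne3, hne4, hne5⟩ := hgen e hA1 hA2 hB1 hB2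
        rw [hτo e hne1 hne2 hne3 hne4 hne5] at h
        exact Or.inr (Or.inr (Option.some.inj h).symm)
    intro e he e2 he2 hne a h1 h2
    rcases hτchar e he a h1 with ⟨he3, ha⟩ | ⟨he3, ha⟩ | ha <;>
      rcases hτchar e2 he2 a h2 with ⟨he4, ha2⟩ | ⟨he4, ha2⟩ | ha2
    · exact hne (he3.trans he4.symm)
    · exact D'.hxy (congrArg Prod.snd (ha.symm.trans ha2)).symm
    · exact D'.hnotgl ((ha2.symm.trans ha) ▸ he2)
    · exact D'.hxy (congrArg Prod.snd (ha2.symm.trans ha)).symm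
    · exact hne (he3.trans he4.symm)
    · exact D'.hnotzl ((ha2.symm.trans ha) ▸ he2)
    · exact D'.hnotgl ((ha.symm.trans ha2) ▸ he)
    · exact D'.hnotzl ((ha.symm.trans ha2) ▸ he)
    · exact hne (ha.symm.trans ha2)
  -- hν
  · intro e he q hq
    rcases D'.hsplit e he with rfl | rfl | rfl | rfl | rfl | ⟨heC, hA1, hA2, hB1, hB2, hB3, hB4⟩
    · rw [hν3, List.mem_singleton] at hq; rw [hq]; exact hn3
    · rw [hν1, List.mem_singleton] at hq; rw [hq]; exact hn1
    · rw [hν2, List.mem_singleton] at hq; rw [hq]; exact hn2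
    · rw [hν4, List.mem_singleton] at hq; rw [hq]; exact hn4
    · rw [hν5, List.mem_singleton] at hq; rw [hq]; exact hn5
    · obtain ⟨hne1, hne2, hne3, hne4, hne5⟩ := hgen e hA1 hA2 hB1 hB2
      rw [hνo e hne1 hne2 hne3 hne4 hne5] at hq
      exact absurd hq (List.not_mem_nil (a := q))
  -- hνd
  · intro e he e2 he2 hne q hq hq2
    have hq2gen : ∀ a : ℕ × ℕ, e2 ∈ N'.E → q = a →
        (e2 = (D'.py, N'.label c.2) → a ≠ (D.py, N.label c.2)) →
        (e2 = (D'.py, D'.px) → a ≠ (D.py, D.px)) →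
        (e2 = (D'.px, N'.label c.1) → a ≠ (D.px, N.label c.1)) →
        (e2 = (D'.gpy, D'.py) → a ≠ (D.gpy, D.py)) →
        (e2 = (D'.z, D'.px) → a ≠ (D.z, D.px)) → False := by
      intro a he2' hqa k1 k2 k3 k4 k5
      rcases D'.hsplit e2 he2' with h | h | h | h | h | ⟨heC2, hC1, hC2, hD1, hD2, hD3, hD4⟩
      · subst h; rw [hν3, List.mem_singleton] at hq2; exact (k3 rfl) (hqa.symm.trans hq2)
      · subst h; rw [hν1, List.mem_singleton] at hq2; exact (k1 rfl) (hqa.symm.trans hq2)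
      · subst h; rw [hν2, List.mem_singleton] at hq2; exact (k2 rfl) (hqa.symm.trans hq2)
      · subst h; rw [hν4, List.mem_singleton] at hq2; exact (k4 rfl) (hqa.symm.trans hq2)
      · subst h; rw [hν5, List.mem_singleton] at hq2; exact (k5 rfl) (hqa.symm.trans hq2)
      · obtain ⟨hne1, hne2, hne3, hne4, hne5⟩ := hgen e2 hC1 hC2 hD1 hD2
        rw [hνo e2 hne1 hne2 hne3 hne4 hne5] at hq2
        exact absurd hq2 (List.not_mem_nil (a := q))
    rcases D'.hsplit e he with rfl | rfl | rfl | rfl | rfl | ⟨heC, hA1, hA2, hB1, hB2, hB3, hB4⟩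
    · rw [hν3, List.mem_singleton] at hq
      refine hq2gen _ he2 hq ?_ ?_ ?_ ?_ ?_
      · intro _; exact Ne.symm hm13
      · intro _; exact Ne.symm hm23
      · intro hh; exact absurd hh.symm hne
      · intro _; exact hm34
      · intro _; exact hm35
    · rw [hν1, List.mem_singleton] at hq
      refine hq2gen _ he2 hq ?_ ?_ ?_ ?_ ?_
      · intro hh; exact absurd hh.symm hne
      · intro _; exact hm12
      · intro _; exact hm13
      · intro _; exact hm14
      · intro _; exact hm15
    · rw [hν2, List.mem_singleton] at hq
      refine hq2gen _ he2 hq ?_ ?_ ?_ ?_ ?_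
      · intro _; exact Ne.symm hm12
      · intro hh; exact absurd hh.symm hne
      · intro _; exact hm23
      · intro _; exact hm24
      · intro _; exact hm25
    · rw [hν4, List.mem_singleton] at hq
      refine hq2gen _ he2 hq ?_ ?_ ?_ ?_ ?_
      · intro _; exact Ne.symm hm14
      · intro _; exact Ne.symm hm24
      · intro _; exact Ne.symm hm34
      · intro hh; exact absurd hh.symm hne
      · intro _; exact hm45
    · rw [hν5, List.mem_singleton] at hq
      refine hq2gen _ he2 hq ?_ ?_ ?_ ?_ ?_
      · intro _; exact Ne.symm hm15
      · intro _; exact Ne.symm hm25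
      · intro _; exact Ne.symm hm35
      · intro _; exact Ne.symm hm45
      · intro hh; exact absurd hh.symm hne
    · obtain ⟨hne1, hne2, hne3, hne4, hne5⟩ := hgen e hA1 hA2 hB1 hB2
      rw [hνo e hne1 hne2 hne3 hne4 hne5] at hq
      exact absurd hq (List.not_mem_nil (a := q))

end Network

open Network

/-- for binary networks and a pair `c` reducible in both, if
`N'c` is a subnetwork of `Nc` then `N'` is a subnetwork of `N`. -/
theorem binary_subnetwork_lifts_along_reduction (X : Type) (N N' : Network X)
    (hN : N.IsPhylo) (hN' : N'.IsPhylo) (hb : N.IsBinary) (hb' : N'.IsBinary)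
    (htaxa : N'.taxa ⊆ N.taxa) (c : X × X)
    (hc : N.ReduciblePair c.1 c.2) (hc' : N'.ReduciblePair c.1 c.2)
    (hsub : IsSubnetwork (N'.reducePair c) (N.reducePair c)) :
    IsSubnetwork N' N := by
  classical
  obtain ⟨f, g, hemb⟩ := hsub
  have hf1 := hemb.1
  have hf2 := hemb.2.1
  have hf3 := hemb.2.2.1
  have hf4 := hemb.2.2.2.1
  have hNinj : Set.InjOn N.label ↑N.taxa := hN.2.2.2.2.1
  have hNE' : ∀ e ∈ N'.E, e.1 ∈ N'.V ∧ e.2 ∈ N'.V := hN'.2.2.2.1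
  have hrout' : N'.outdeg N'.root = 1 := hN'.2.2.1
  have hleaflab' := hN'.2.2.2.2.2.2.1
  have hclass' := hN'.2.2.2.2.2.2.2.1
  have hacy' := hN'.2.2.2.2.2.2.2.2
  by_cases hC' : N'.IsCherry c.1 c.2
  · obtain ⟨D'⟩ := cherry_data_ex hN' hb' hC'
    by_cases hC : N.IsCherry c.1 c.2
    · -- Case A1 : both cherries
      obtain ⟨D⟩ := cherry_data_ex hN hb hC
      have hVc : (N.reducePair c).V ⊆ N.V := by
        intro v hv
        rw [D.hV] at hv
        exact (Finset.mem_erase.mp (Finset.mem_erase.mp hv).2).2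
      have hfP : ∀ v ∈ (N'.reducePair c).V, f v ≠ D.p := by
        intro v hv
        have h := hf1 v hv
        rw [D.hV] at h
        exact (Finset.mem_erase.mp h).1
      have hflx : ∀ v ∈ (N'.reducePair c).V, f v ≠ N.label c.1 := by
        intro v hv
        have h := hf1 v hv
        rw [D.hV] at h
        exact (Finset.mem_erase.mp (Finset.mem_erase.mp h).2).1
      have hn1 : (D.p, N.label c.1) ∉ (N.reducePair c).E := by
        intro h
        rcases (D.hE _).mp h with ⟨_, _, h1, _, _⟩ | h2
        · exact h1 rfl
        · exact D.hxy (congrArg Prod.snd h2)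
      have hn2 : (D.p, N.label c.2) ∉ (N.reducePair c).E := by
        intro h
        rcases (D.hE _).mp h with ⟨_, _, _, h1, _⟩ | h2
        · exact h1 rfl
        · exact D.hgpp (congrArg Prod.fst h2).symm
      have hn3 : (D.gp, D.p) ∉ (N.reducePair c).E := by
        intro h
        rcases (D.hE _).mp h with ⟨_, _, _, _, h1⟩ | h2
        · exact h1 rfl
        · exact D.hply (congrArg Prod.snd h2)
      have hsinklyc : ∀ e ∈ (N.reducePair c).E, e.1 ≠ N.label c.2 := by
        intro e he
        rcases (D.hE e).mp he with ⟨heE, _, _, _, _⟩ | rfl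
        · exact D.hsinky e heE
        · exact D.hgply
      have hinlyc : ∀ e ∈ (N.reducePair c).E, e.2 = N.label c.2 → e = (D.gp, N.label c.2) := by
        intro e he h2
        rcases (D.hE e).mp he with ⟨heE, _, _, h3, _⟩ | rfl
        · exact absurd (congrArg Prod.fst (D.hiny e heE h2)) h3
        · rfl
      have hmid : ∀ e ∈ (N.reducePair c).E, (∃ e' ∈ (N.reducePair c).E, e'.1 = e.2) →
          e ∈ N.E := by
        intro e he hsucc
        rcases (D.hE e).mp he with ⟨heE, _, _, _, _⟩ | rfl
        · exact heE
        · obtain ⟨e', he', h1⟩ := hsucc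
          exact absurd h1 (hsinklyc e' he')
      have hlastN : ∀ e ∈ (N.reducePair c).E, e.2 ≠ N.label c.2 →
          e.2 = N.label c.1 ∨ e ∈ N.E := by
        intro e he h2
        rcases (D.hE e).mp he with ⟨heE, _, _, _, _⟩ | rfl
        · exact Or.inr heE
        · exact absurd rfl h2
      refine guest_cherry_case D' hemb hN' D.hlab hVc D.p D.gp
        [D.p, N.label c.1] [D.p, N.label c.2] D.hpV D.hlxV hfP hflx (Ne.symm D.hplx)
        (by simp [IsDipath, List.Chain', D.hpx]) rfl (by simp)
        (by simp [IsDipath, List.Chain', D.hpy]) rfl (by simp)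
        ?_ ?_ hn3 ?_ ?_ ?_ hinlyc hsinklyc hmid hlastN D.hgp
      · intro q hq
        have hq' : q = (D.p, N.label c.1) := by simpa [pathEdges] using hq
        rw [hq']; exact hn1
      · intro q hq
        have hq' : q = (D.p, N.label c.2) := by simpa [pathEdges] using hq
        rw [hq']; exact hn2
      · intro q hq hq2
        have hq' : q = (D.p, N.label c.1) := by simpa [pathEdges] using hq
        have hq2' : q = (D.p, N.label c.2) := by simpa [pathEdges] using hq2
        exact D.hxy (congrArg Prod.snd (hq'.symm.trans hq2'))
      · intro hq
        have hq' : (D.gp, D.p) = (D.p, N.label c.1) := by simpa [pathEdges] using hq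
        exact D.hgpp (congrArg Prod.fst hq')
      · intro hq
        have hq' : (D.gp, D.p) = (D.p, N.label c.2) := by simpa [pathEdges] using hq
        exact D.hgpp (congrArg Prod.fst hq')
    · -- Case A2 : guest cherry, host reticulated cherry
      have hR : N.IsRetCherry c.1 c.2 := hc.resolve_left hC
      obtain ⟨D⟩ := retic_data_ex hN hb hC hR
      have hVc : (N.reducePair c).V ⊆ N.V := by
        intro v hv
        rw [D.hV] at hv
        exact (Finset.mem_erase.mp (Finset.mem_erase.mp hv).2).2
      have hfP : ∀ v ∈ (N'.reducePair c).V, f v ≠ D.py := by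
        intro v hv
        have h := hf1 v hv
        rw [D.hV] at h
        exact (Finset.mem_erase.mp (Finset.mem_erase.mp h).2).1
      have hsinklyc : ∀ e ∈ (N.reducePair c).E, e.1 ≠ N.label c.2 := by
        intro e he
        rcases (D.hE e).mp he with ⟨heE, _, _, _, _⟩ | rfl | rfl
        · exact D.hsinky e heE
        · exact D.hgpyly
        · exact D.hzly
      have hsinklxc : ∀ e ∈ (N.reducePair c).E, e.1 ≠ N.label c.1 := by
        intro e he
        rcases (D.hE e).mp he with ⟨heE, _, _, _, _⟩ | rfl | rfl
        · exact D.hsinkx e heE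
        · exact D.hgpylx
        · exact D.hzlx
      have hinlyc : ∀ e ∈ (N.reducePair c).E, e.2 = N.label c.2 →
          e = (D.gpy, N.label c.2) := by
        intro e he h2
        rcases (D.hE e).mp he with ⟨heE, h1, _, _, _⟩ | rfl | rfl
        · exact absurd (congrArg Prod.fst (D.hiny e heE h2)) h1
        · rfl
        · exact absurd h2 (fun hh => D.hxy hh)
      have hmid : ∀ e ∈ (N.reducePair c).E, (∃ e' ∈ (N.reducePair c).E, e'.1 = e.2) →
          e ∈ N.E := by
        intro e he hsucc
        rcases (D.hE e).mp he with ⟨heE, _, _, _, _⟩ | rfl | rfl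
        · exact heE
        · obtain ⟨e', he', h1⟩ := hsucc
          exact absurd h1 (hsinklyc e' he')
        · obtain ⟨e', he', h1⟩ := hsucc
          exact absurd h1 (hsinklxc e' he')
      have hlastN : ∀ e ∈ (N.reducePair c).E, e.2 ≠ N.label c.2 →
          e.2 = N.label c.1 ∨ e ∈ N.E := by
        intro e he h2
        rcases (D.hE e).mp he with ⟨heE, _, _, _, _⟩ | rfl | rfl
        · exact Or.inr heE
        · exact absurd rfl h2
        · exact Or.inl rfl
      have hn1 : (D.py, N.label c.2) ∉ (N.reducePair c).E := by
        intro h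
        rcases (D.hE _).mp h with ⟨_, h1, _, _, _⟩ | h2 | h2
        · exact h1 rfl
        · exact D.hgpypy (congrArg Prod.fst h2).symm
        · exact D.hxy (congrArg Prod.snd h2).symm
      have hn2 : (D.py, D.px) ∉ (N.reducePair c).E := by
        intro h
        rcases (D.hE _).mp h with ⟨_, h1, _, _, _⟩ | h2 | h2
        · exact h1 rfl
        · exact D.hgpypy (congrArg Prod.fst h2).symm
        · exact D.hzpy (congrArg Prod.fst h2).symm
      have hn3 : (D.px, N.label c.1) ∉ (N.reducePair c).E := by
        intro h
        rcases (D.hE _).mp h with ⟨_, _, _, h1, _⟩ | h2 | h2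
        · exact h1 rfl
        · exact D.hxy (congrArg Prod.snd h2)
        · exact D.hzpx (congrArg Prod.fst h2).symm
      have hn4 : (D.gpy, D.py) ∉ (N.reducePair c).E := by
        intro h
        rcases (D.hE _).mp h with ⟨_, _, h1, _, _⟩ | h2 | h2
        · exact h1 rfl
        · exact D.hpyly (congrArg Prod.snd h2)
        · exact D.hpylx (congrArg Prod.snd h2)
      -- the crucial fact : no vertex of N'c is mapped to the leaf x of N
      have hEnd : ∀ e3 ∈ (N'.reducePair c).E,
          e3.1 ∈ (N'.reducePair c).V ∧ e3.2 ∈ (N'.reducePair c).V := by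
        intro e3 he3
        rcases (D'.hE e3).mp he3 with ⟨heE, k1, k2, k3, k4⟩ | rfl
        · constructor
          · rw [D'.hV]
            exact Finset.mem_erase.mpr ⟨k3, Finset.mem_erase.mpr ⟨k1, (hNE' e3 heE).1⟩⟩
          · rw [D'.hV]
            exact Finset.mem_erase.mpr ⟨k4, Finset.mem_erase.mpr ⟨k2, (hNE' e3 heE).2⟩⟩
        · constructor
          · rw [D'.hV]
            exact Finset.mem_erase.mpr ⟨D'.hgpp, Finset.mem_erase.mpr ⟨D'.hgplx, D'.hgpV⟩⟩
          · rw [D'.hV]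
            exact Finset.mem_erase.mpr ⟨fun hh => D'.hply hh.symm,
              Finset.mem_erase.mpr ⟨fun hh => D'.hxy hh.symm, D'.hlyV⟩⟩
      have hflx : ∀ v ∈ (N'.reducePair c).V, f v ≠ N.label c.1 := by
        intro v hv heq
        have hv1 : v ≠ D'.p := (Finset.mem_erase.mp (by rw [D'.hV] at hv; exact hv)).1
        have hv2 : v ≠ N'.label c.1 :=
          (Finset.mem_erase.mp (Finset.mem_erase.mp (by rw [D'.hV] at hv; exact hv)).2).1
        have hvV' : v ∈ N'.V :=
          (Finset.mem_erase.mp (Finset.mem_erase.mp (by rw [D'.hV] at hv; exact hv)).2).2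
        by_cases hex : ∃ e3 ∈ (N'.reducePair c).E, e3.1 = v
        · obtain ⟨e3, he3, h31⟩ := hex
          have hdp := hf4 e3 he3
          cases hgl : g e3 with
          | nil =>
              rw [hgl] at hdp
              exact absurd hdp.2.1 (by simp)
          | cons u t =>
            cases t with
            | nil =>
                rw [hgl] at hdp
                have hu1 : u = f e3.1 := by simpa using hdp.2.1
                have hu2 : u = f e3.2 := by simpa using hdp.2.2
                have hfv : u = f v := by rw [← h31]; exact hu1
                have hee : e3.2 = v := hf2
                  (Finset.mem_coe.mpr (hEnd e3 he3).2)
                  (Finset.mem_coe.mpr hv) (hu2.symm.trans hfv)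
                have he3vv : e3 = (v, v) := Prod.ext h31 hee
                rcases (D'.hE e3).mp he3 with ⟨heE, _, _, _, _⟩ | hnew
                · exact no_self_edge hacy' (he3vv ▸ heE)
                · have hvv : (v, v) = (D'.gp, N'.label c.2) := he3vv.symm.trans hnew
                  exact D'.hgply
                    ((congrArg Prod.fst hvv).symm.trans (congrArg Prod.snd hvv))
            | cons u2 t2 =>
                rw [hgl] at hdp
                have hch : List.Chain' (fun a b => (a, b) ∈ (N.reducePair c).E)
                    (u :: u2 :: t2) := hdp.1
                have hedge : (u, u2) ∈ (N.reducePair c).E := (List.isChain_cons_cons.mp hch).1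
                have hulx : u = N.label c.1 := by
                  have hu1 : u = f e3.1 := by simpa using hdp.2.1
                  rw [hu1, h31]; exact heq
                exact hsinklxc (u, u2) hedge hulx
        · have hnoE' : ∀ e ∈ N'.E, e.1 ≠ v := by
            intro e he hev
            by_cases h1 : e.2 = N'.label c.1
            · exact hv1 (hev.symm.trans (congrArg Prod.fst (D'.hinx e he h1)))
            by_cases h2 : e.2 = D'.p
            · exact hex ⟨(D'.gp, N'.label c.2), D'.hmem,
                (hev.symm.trans (congrArg Prod.fst (D'.hinp e he h2))).symm⟩
            · exact hex ⟨e, (D'.hE e).mpr (Or.inl ⟨he, by rw [hev]; exact hv2, h1,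
                by rw [hev]; exact hv1, h2⟩), hev⟩
          have hod : N'.outdeg v = 0 := by
            rw [outdeg, Finset.card_eq_zero, Finset.filter_eq_empty_iff]
            exact fun e he => hnoE' e he
          rcases hclass' v hvV' with hr | hl | ht | hRt
          · rw [hr, hrout'] at hod
            exact one_ne_zero hod
          · obtain ⟨t, htt, htl⟩ := hleaflab' v hvV' hl
            have htc1 : t ≠ c.1 := by
              intro hh
              apply hv2
              rw [← htl, hh]
            have hft := hf3 t (by rw [D'.htax]; exact Finset.mem_erase.mpr ⟨htc1, htt⟩)
            rw [D'.hlab, D.hlab, htl] at hft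
            have hteq : N.label t = N.label c.1 := hft.symm.trans heq
            exact htc1 (hNinj (Finset.mem_coe.mpr (htaxa htt)) (Finset.mem_coe.mpr D.hx) hteq)
          · have h2 := ht.2
            rw [hod] at h2
            omega
          · have h2 := hRt.2
            rw [hod] at h2
            omega
      refine guest_cherry_case D' hemb hN' D.hlab hVc D.py D.gpy
        [D.py, D.px, N.label c.1] [D.py, N.label c.2] D.hpyV D.hlxV hfP hflx
        (Ne.symm D.hpylx)
        (by simp [IsDipath, List.Chain', D.hpypx, D.hpxx]) rfl (by simp)
        (by simp [IsDipath, List.Chain', D.hpyy]) rfl (by simp)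
        ?_ ?_ hn4 ?_ ?_ ?_ hinlyc hsinklyc hmid hlastN D.hgpy
      · intro q hq
        have hq' : q = (D.py, D.px) ∨ q = (D.px, N.label c.1) := by
          simpa [pathEdges] using hq
        rcases hq' with rfl | rfl
        · exact hn2
        · exact hn3
      · intro q hq
        have hq' : q = (D.py, N.label c.2) := by simpa [pathEdges] using hq
        rw [hq']; exact hn1
      · intro q hq hq2
        have hq' : q = (D.py, D.px) ∨ q = (D.px, N.label c.1) := by
          simpa [pathEdges] using hq
        have hq2' : q = (D.py, N.label c.2) := by simpa [pathEdges] using hq2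
        rcases hq' with rfl | rfl
        · exact D.hpxly (congrArg Prod.snd hq2')
        · exact D.hpxpy (congrArg Prod.fst hq2')
      · intro hq
        have hq' : (D.gpy, D.py) = (D.py, D.px) ∨ (D.gpy, D.py) = (D.px, N.label c.1) := by
          simpa [pathEdges] using hq
        rcases hq' with hh | hh
        · exact D.hgpypy (congrArg Prod.fst hh)
        · exact D.hgpypx (congrArg Prod.fst hh)
      · intro hq
        have hq' : (D.gpy, D.py) = (D.py, N.label c.2) := by simpa [pathEdges] using hq
        exact D.hgpypy (congrArg Prod.fst hq')
  · have hR' : N'.IsRetCherry c.1 c.2 := hc'.resolve_left hC'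
    obtain ⟨D'⟩ := retic_data_ex hN' hb' hC' hR'
    by_cases hC : N.IsCherry c.1 c.2
    · -- Case B1 : guest reticulated cherry, host cherry : impossible
      obtain ⟨D⟩ := cherry_data_ex hN hb hC
      exfalso
      have hlx'm : N'.label c.1 ∈ (N'.reducePair c).V := by
        rw [D'.hV]
        exact Finset.mem_erase.mpr ⟨Ne.symm D'.hpxlx,
          Finset.mem_erase.mpr ⟨Ne.symm D'.hpylx, D'.hlxV⟩⟩
      have h1 := hf1 _ hlx'm
      rw [D.hV] at h1
      have h2 : f (N'.label c.1) ≠ N.label c.1 :=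
        (Finset.mem_erase.mp (Finset.mem_erase.mp h1).2).1
      have h3 := hf3 c.1 (by rw [D'.htax]; exact D'.hx)
      rw [D'.hlab, D.hlab] at h3
      exact h2 h3
    · -- Case B2 : both reticulated cherries
      have hR : N.IsRetCherry c.1 c.2 := hc.resolve_left hC
      obtain ⟨D⟩ := retic_data_ex hN hb hC hR
      exact retic_retic_case D' D hemb hN'
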